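/- arXiv:2206.06453 — 7 statements merged into one kernel-verified Lean document; each statement's English description precedes it below -/
import Mathlib

section
/- Let R be a semiperfect ring and M a finitely generated left R-module. If M is cyclic, then M is isomorphic to Re/Ie for some idempotent e in R and some left ideal I contained in the Jacobson radical J(R). -/
open Submodule

/-- The radical of a module: intersection of all maximal submodules. -/
def moduleRad (R M : Type*) [Ring R] [AddCommGroup M] [Module R M] : Submodule R M :=
  sInf {N : Submodule R M | IsCoatom N}

/-- The socle of a module: sum of all simple submodules. -/
def moduleSoc (R M : Type*) [Ring R] [AddCommGroup M] [Module R M] : Submodule R M :=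
  sSup {N : Submodule R M | IsAtom N}

/-- A submodule is superfluous (small) if it is redundant in any sup reaching the top. -/
def IsSuperfluous {R M : Type*} [Ring R] [AddCommGroup M] [Module R M]
    (N : Submodule R M) : Prop :=
  ∀ L : Submodule R M, N ⊔ L = ⊤ → L = ⊤

/-- A module is cyclic if generated by one element. -/
def IsCyclicModule (R M : Type*) [Ring R] [AddCommGroup M] [Module R M] : Prop :=
  ∃ m : M, Submodule.span R {m} = ⊤

/-- A module has cyclic top if `M / rad M` is cyclic. -/
def HasCyclicTop (R M : Type*) [Ring R] [AddCommGroup M] [Module R M] : Prop :=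
  IsCyclicModule R (M ⧸ moduleRad R M)

/-- Square-free: no direct sum of two nonzero isomorphic submodules. -/
def IsSquareFreeModule (R M : Type*) [Ring R] [AddCommGroup M] [Module R M] : Prop :=
  ∀ A B : Submodule R M, A ⊓ B = ⊥ → Nonempty (A ≃ₗ[R] B) → A = ⊥

/-- The Jacobson radical of a ring. -/
def jacobsonRadical (R : Type*) [Ring R] : Ideal R := (⊥ : Ideal R).jacobson

/-- A semiperfect ring: `R/J(R)` is semisimple and idempotents lift modulo `J(R)`. -/
def IsSemiperfectRing (R : Type*) [Ring R] : Prop :=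
  IsSemisimpleModule R (R ⧸ jacobsonRadical R) ∧
  ∀ a : R, a * a - a ∈ jacobsonRadical R →
    ∃ e : R, IsIdempotentElem e ∧ e - a ∈ jacobsonRadical R

/-- A local module: a (unique) maximal submodule containing every proper submodule. -/
def IsLocalModule (R M : Type*) [Ring R] [AddCommGroup M] [Module R M] : Prop :=
  ∃ N : Submodule R M, IsCoatom N ∧ ∀ L : Submodule R M, L ≠ ⊤ → L ≤ N

/-- An indecomposable module: nonzero and not the direct sum of two nonzero submodules. -/
def IsIndecomposableModule (R M : Type*) [Ring R] [AddCommGroup M] [Module R M] : Prop :=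
  Nontrivial M ∧ ∀ A B : Submodule R M, A ⊓ B = ⊥ → A ⊔ B = ⊤ → A = ⊥ ∨ B = ⊥

/-- A uniserial module: submodules linearly ordered by inclusion. -/
def IsUniserialModule (R M : Type*) [Ring R] [AddCommGroup M] [Module R M] : Prop :=
  ∀ A B : Submodule R M, A ≤ B ∨ B ≤ A

/-- Left T-nilpotence of a set. -/
def IsLeftTNilpotent {R : Type*} [Ring R] (S : Set R) : Prop :=
  ∀ x : ℕ → R, (∀ n, x n ∈ S) → ∃ n : ℕ, ((List.range (n + 1)).map x).prod = 0

/-- A left perfect ring: `R/J` semisimple and `J` left T-nilpotent. -/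
def IsLeftPerfectRing (R : Type*) [Ring R] : Prop :=
  IsSemisimpleModule R (R ⧸ jacobsonRadical R) ∧
  IsLeftTNilpotent (jacobsonRadical R : Set R)

/-- Composition length of a module, as the Krull dimension of its submodule lattice. -/
noncomputable def modLength (R M : Type*) [Ring R] [AddCommGroup M] [Module R M] :
    WithBot ℕ∞ :=
  Order.krullDim (Submodule R M)

/-- A local idempotent: the corner ring `eRe` is a local ring. -/
def IsLocalIdempotent {R : Type*} [Ring R] (e : R) : Prop :=
  IsIdempotentElem e ∧ e ≠ 0 ∧
  ∀ x : R, x = e * x * e →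
    (∃ y : R, y = e * y * e ∧ x * y = e ∧ y * x = e) ∨
    (∃ y : R, y = e * y * e ∧ (e - x) * y = e ∧ y * (e - x) = e)

/-- A primitive idempotent. -/
def IsPrimitiveIdempotent {R : Type*} [Ring R] (e : R) : Prop :=
  IsIdempotentElem e ∧ e ≠ 0 ∧
  ∀ a b : R, IsIdempotentElem a → IsIdempotentElem b →
    a * b = 0 → b * a = 0 → a + b = e → a = 0 ∨ b = 0

/-- An essential submodule: meets every nonzero submodule nontrivially. -/
def IsEssentialSubmodule {R M : Type*} [Ring R] [AddCommGroup M] [Module R M]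
    (N : Submodule R M) : Prop :=
  ∀ L : Submodule R M, N ⊓ L = ⊥ → L = ⊥

theorem stmt2 {R M : Type*} [Ring R] [AddCommGroup M] [Module R M]
    (hR : IsSemiperfectRing R) [Module.Finite R M] (hM : IsCyclicModule R M) :
    ∃ e : R, IsIdempotentElem e ∧ ∃ I : Ideal R, I ≤ jacobsonRadical R ∧
      Nonempty (M ≃ₗ[R]
        (LinearMap.range (LinearMap.toSpanSingleton R R e) ⧸
          Submodule.comap (LinearMap.range (LinearMap.toSpanSingleton R R e)).subtype
            (Submodule.map (LinearMap.toSpanSingleton R R e) I))) := by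
  obtain ⟨m, hm⟩ := hM
  set J : Ideal R := jacobsonRadical R with hJdef
  -- Nakayama: J is superfluous in R
  have nak : ∀ L : Ideal R, L ⊔ J = ⊤ → L = ⊤ := by
    intro L hL
    by_contra h
    obtain ⟨mx, hmx, hLmx⟩ := Ideal.exists_le_maximal L h
    have hJm : J ≤ mx := by
      refine sInf_le ?_
      exact ⟨bot_le, hmx⟩
    exact hmx.ne_top (top_le_iff.mp (hL ▸ sup_le hLmx hJm))
  set φ : R →ₗ[R] M := LinearMap.toSpanSingleton R M m with hφdef
  have hφsurj : Function.Surjective φ := by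
    rw [← LinearMap.range_eq_top, ← LinearMap.span_singleton_eq_range]
    exact hm
  set K : Ideal R := LinearMap.ker φ with hKdef
  haveI : IsSemisimpleModule R (R ⧸ J) := hR.1
  obtain ⟨Cb, hCb⟩ := exists_isCompl (Submodule.map J.mkQ K)
  set C : Ideal R := Submodule.comap J.mkQ Cb with hCdef
  -- write 1 = k + c with k ∈ K, c ∈ C
  have h1 : ∃ k ∈ K, (1:R) - k ∈ C := by
    have h1m : J.mkQ 1 ∈ Submodule.map J.mkQ K ⊔ Cb := by
      rw [hCb.sup_eq_top]; trivial
    obtain ⟨a, ha, b, hb, hab⟩ := Submodule.mem_sup.mp h1m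
    obtain ⟨k, hk, rfl⟩ := ha
    refine ⟨k, hk, ?_⟩
    show J.mkQ (1 - k) ∈ Cb
    have : J.mkQ (1 - k) = b := by
      rw [map_sub, ← hab]; abel
    rw [this]; exact hb
  obtain ⟨k, hk, hc⟩ := h1
  set c : R := 1 - k with hcdef
  -- (K ⊔ J) ⊓ C ≤ J
  have hmapJ : Submodule.map J.mkQ (K ⊔ J) = Submodule.map J.mkQ K := by
    rw [Submodule.map_sup]
    have : Submodule.map J.mkQ J = ⊥ := by
      rw [eq_bot_iff]
      rintro _ ⟨x, hx, rfl⟩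
      simpa using (Submodule.Quotient.mk_eq_zero J).mpr hx
    rw [this, sup_bot_eq]
  have hinf : (K ⊔ J) ⊓ C ≤ J := by
    rintro x ⟨hx1, hx2⟩
    have hxk : J.mkQ x ∈ Submodule.map J.mkQ K := by
      rw [← hmapJ]; exact Submodule.mem_map_of_mem hx1
    have hzero : J.mkQ x ∈ (⊥ : Submodule R (R ⧸ J)) := by
      rw [← hCb.inf_eq_bot]
      exact ⟨hxk, hx2⟩
    have : J.mkQ x = 0 := hzero
    rwa [← Submodule.Quotient.mk_eq_zero J]
  -- c*c - c ∈ J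
  have hck : c * k ∈ (K ⊔ J) ⊓ C := by
    constructor
    · exact Submodule.mem_sup_left (by simpa using K.smul_mem c hk)
    · have h1 : c * k = c - c * c := by
        rw [hcdef]; noncomm_ring
      rw [h1]
      exact sub_mem hc (by simpa using C.smul_mem c hc)
  have hc2 : c * c - c ∈ J := by
    have : c * c - c = -(c * k) := by rw [hcdef]; noncomm_ring
    rw [this]
    exact neg_mem (hinf hck)
  obtain ⟨e, he, heJ⟩ := hR.2 c hc2
  set t : R →ₗ[R] R := LinearMap.toSpanSingleton R R e with htdef
  have ht : ∀ x : R, t x = x * e := fun x => rfl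
  -- K ⊔ Re = ⊤
  have hsup : K ⊔ LinearMap.range t = ⊤ := by
    apply nak
    rw [Ideal.eq_top_iff_one]
    have h1e : (1:R) = k + e + (c - e) := by rw [hcdef]; abel
    have hemem : e ∈ LinearMap.range t := ⟨1, by rw [ht]; rw [one_mul]⟩
    have hce : c - e ∈ J := by
      have : c - e = -(e - c) := by abel
      rw [this]; exact neg_mem heJ
    rw [h1e]
    exact add_mem (Submodule.mem_sup_left
      (add_mem (Submodule.mem_sup_left hk) (Submodule.mem_sup_right hemem)))
      (Submodule.mem_sup_right hce)
  -- K ⊓ Re ≤ J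
  have hKRe : K ⊓ LinearMap.range t ≤ J := by
    rintro y ⟨hyK, x, rfl⟩
    rw [ht] at *
    have h1 : x * (e - c) ∈ J := by simpa using J.smul_mem x heJ
    have hxc : x * c ∈ (K ⊔ J) ⊓ C := by
      constructor
      · have : x * c = x * e - x * (e - c) := by noncomm_ring
        rw [this]
        exact sub_mem (Submodule.mem_sup_left hyK) (Submodule.mem_sup_right h1)
      · simpa using C.smul_mem x hc
    have hxcJ : x * c ∈ J := hinf hxc
    have : x * e = x * (e - c) + x * c := by noncomm_ring
    rw [this]
    exact add_mem h1 hxcJ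
  set I : Ideal R := J ⊓ Submodule.comap t K with hIdef
  have hmap : Submodule.map t I = K ⊓ LinearMap.range t := by
    apply le_antisymm
    · rintro _ ⟨x, ⟨hxJ, hxK⟩, rfl⟩
      exact ⟨hxK, ⟨x, rfl⟩⟩
    · rintro y ⟨hyK, x, rfl⟩
      have hyJ : t x ∈ J := hKRe ⟨hyK, ⟨x, rfl⟩⟩
      have htt : t (t x) = t x := by
        rw [ht, ht, mul_assoc, he]
      refine ⟨t x, ⟨hyJ, ?_⟩, htt⟩
      show t (t x) ∈ K
      rw [htt]; exact hyK
  set ψ : (LinearMap.range t) →ₗ[R] M := φ ∘ₗ (LinearMap.range t).subtype with hψdef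
  have hN : Submodule.comap (LinearMap.range t).subtype (Submodule.map t I)
      = LinearMap.ker ψ := by
    rw [hmap, Submodule.comap_inf, Submodule.comap_subtype_self, inf_top_eq,
      hψdef, LinearMap.ker_comp]
  have hψsurj : Function.Surjective ψ := by
    intro y
    obtain ⟨r, hr⟩ := hφsurj y
    have hrm : r ∈ K ⊔ LinearMap.range t := hsup ▸ Submodule.mem_top
    obtain ⟨a, ha, b, hb, hab⟩ := Submodule.mem_sup.mp hrm
    refine ⟨⟨b, hb⟩, ?_⟩
    show φ b = y
    have hφa : φ a = 0 := ha
    have : φ r = φ a + φ b := by rw [← map_add, hab]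
    rw [← hr, this, hφa, zero_add]
  refine ⟨e, he, I, inf_le_left, ⟨?_⟩⟩
  rw [show LinearMap.toSpanSingleton R R e = t from rfl, hN]
  exact (ψ.quotKerEquivOfSurjective hψsurj).symm
end

section
/- Let R be a semiperfect ring and M a finitely generated left R-module. Then M is cyclic if and only if M/Rad(M) embeds into R/J(R) as a left R-module. -/
open Submodule

section Helpers

variable {R M : Type*} [Ring R] [AddCommGroup M] [Module R M]

lemma jac_smul_mem_coatom {j : R} (hj : j ∈ jacobsonRadical R) {N : Submodule R M}
    (hN : IsCoatom N) (x : M) : j • x ∈ N := by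
  by_cases hx : x ∈ N
  · exact N.smul_mem j hx
  · set I : Ideal R := N.comap (LinearMap.toSpanSingleton R M x) with hI
    have hImax : I.IsMaximal := by
      constructor
      constructor
      · intro h
        apply hx
        have h1 : (1 : R) ∈ I := h ▸ Submodule.mem_top
        rw [hI, Submodule.mem_comap] at h1
        simpa using h1
      · intro J' hJ'
        obtain ⟨r, hrJ', hrI⟩ := SetLike.exists_of_lt hJ'
        have hrx : r • x ∉ N := hrI
        have hsup : N ⊔ Submodule.span R {r • x} = ⊤ := by
          apply hN.2
          rw [lt_iff_le_and_ne]
          refine ⟨le_sup_left, fun h => hrx ?_⟩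
          rw [h]
          exact Submodule.mem_sup_right (Submodule.mem_span_singleton_self _)
        rw [eq_top_iff]
        intro s _
        have : s • x ∈ N ⊔ Submodule.span R {r • x} := hsup ▸ Submodule.mem_top
        obtain ⟨n, hn, y, hy, hny⟩ := Submodule.mem_sup.mp this
        obtain ⟨t, rfl⟩ := Submodule.mem_span_singleton.mp hy
        have h1 : (s - t * r) • x ∈ N := by
          have : (s - t * r) • x = n := by
            rw [sub_smul, mul_smul]
            rw [← hny]; abel
          rw [this]; exact hn
        have h2 : s - t * r ∈ J' := hJ'.le h1
        have h3 : t * r ∈ J' := J'.smul_mem t hrJ'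
        have := J'.add_mem h2 h3
        simpa using this
    have hjI : j ∈ I := by
      have : j ∈ sInf {J : Ideal R | ⊥ ≤ J ∧ J.IsMaximal} := hj
      exact Submodule.mem_sInf.mp this I ⟨bot_le, hImax⟩
    rw [hI, Submodule.mem_comap] at hjI
    simpa using hjI

lemma jac_smul_rad (j : R) (hj : j ∈ jacobsonRadical R) (y : M ⧸ moduleRad R M) :
    j • y = 0 := by
  obtain ⟨x, rfl⟩ := Submodule.Quotient.mk_surjective _ y
  rw [← Submodule.Quotient.mk_smul, Submodule.Quotient.mk_eq_zero]
  exact Submodule.mem_sInf.mpr fun N hN => jac_smul_mem_coatom hj hN x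

lemma rad_superfluous [Module.Finite R M] (L : Submodule R M)
    (h : moduleRad R M ⊔ L = ⊤) : L = ⊤ := by
  haveI : IsCoatomic (Submodule R M) :=
    CompleteLattice.coatomic_of_top_compact
      ((Submodule.fg_iff_compact ⊤).mp Module.Finite.fg_top)
  rcases eq_top_or_exists_le_coatom L with h' | ⟨N, hN, hLN⟩
  · exact h'
  · have : (⊤ : Submodule R M) ≤ N := h ▸ sup_le (sInf_le hN) hLN
    exact absurd (top_le_iff.mp this) hN.1

end Helpers

theorem stmt3 {R M : Type*} [Ring R] [AddCommGroup M] [Module R M]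
    (hR : IsSemiperfectRing R) [Module.Finite R M] :
    IsCyclicModule R M ↔
      ∃ f : (M ⧸ moduleRad R M) →ₗ[R] (R ⧸ jacobsonRadical R), Function.Injective f := by
  haveI : IsSemisimpleModule R (R ⧸ jacobsonRadical R) := hR.1
  constructor
  · rintro ⟨m, hm⟩
    set mb : M ⧸ moduleRad R M := Submodule.Quotient.mk m with hmb
    have hspan : Submodule.span R {mb} = ⊤ := by
      have : Submodule.map (moduleRad R M).mkQ (Submodule.span R {m}) =
          Submodule.span R {mb} := by
        rw [Submodule.map_span]; simp [hmb]
      rw [← this, hm, Submodule.map_top, Submodule.range_mkQ]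
    set φ : R →ₗ[R] (M ⧸ moduleRad R M) :=
      LinearMap.toSpanSingleton R (M ⧸ moduleRad R M) mb with hφ
    have hle : jacobsonRadical R ≤ LinearMap.ker φ := fun j hj => by
      simp only [LinearMap.mem_ker, hφ, LinearMap.toSpanSingleton_apply]
      exact jac_smul_rad j hj mb
    set φ' := Submodule.liftQ (jacobsonRadical R) φ hle with hφ'
    have hsurj : Function.Surjective φ' := by
      rw [← LinearMap.range_eq_top, hφ', Submodule.range_liftQ, hφ,
        ← LinearMap.span_singleton_eq_range]
      exact hspan
    obtain ⟨C, hC⟩ := ComplementedLattice.exists_isCompl (LinearMap.ker φ')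
    let e1 := φ'.quotKerEquivOfSurjective hsurj
    let e2 := Submodule.quotientEquivOfIsCompl (LinearMap.ker φ') C hC
    refine ⟨C.subtype.comp (e2.toLinearMap.comp e1.symm.toLinearMap), ?_⟩
    exact C.injective_subtype.comp (e2.injective.comp e1.symm.injective)
  · rintro ⟨f, hf⟩
    obtain ⟨C, hC⟩ := ComplementedLattice.exists_isCompl (LinearMap.range f)
    have hsup : LinearMap.range f ⊔ C = ⊤ := hC.sup_eq_top
    have h1 : (Submodule.Quotient.mk 1 : R ⧸ jacobsonRadical R) ∈
        LinearMap.range f ⊔ C := hsup ▸ Submodule.mem_top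
    obtain ⟨d, hd, c, hc, hdc⟩ := Submodule.mem_sup.mp h1
    obtain ⟨x₀, hx₀⟩ := hd
    have hgen : Submodule.span R {x₀} = ⊤ := by
      rw [eq_top_iff]
      intro y _
      obtain ⟨r, hr⟩ := Submodule.Quotient.mk_surjective _ (f y)
      have hfy : f y = r • d + r • c := by
        rw [← smul_add, hdc, ← hr, ← Submodule.Quotient.mk_smul, smul_eq_mul, mul_one]
      have hmem : f y - r • d ∈ LinearMap.range f ⊓ C := by
        constructor
        · exact Submodule.sub_mem _ (LinearMap.mem_range_self f y)
            ((LinearMap.range f).smul_mem r (hx₀ ▸ LinearMap.mem_range_self f x₀))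
        · have : f y - r • d = r • c := by rw [hfy]; abel
          rw [this]; exact C.smul_mem r hc
      rw [hC.inf_eq_bot] at hmem
      have : f y = f (r • x₀) := by
        rw [map_smul, hx₀]
        exact sub_eq_zero.mp ((Submodule.mem_bot R).mp hmem)
      have hyx : y = r • x₀ := hf this
      rw [hyx]
      exact Submodule.smul_mem _ r (Submodule.mem_span_singleton_self x₀)
    obtain ⟨x, hx⟩ := Submodule.Quotient.mk_surjective (moduleRad R M) x₀
    have hsup2 : moduleRad R M ⊔ Submodule.span R {x} = ⊤ := by
      rw [eq_top_iff]
      intro m _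
      have : (Submodule.Quotient.mk m : M ⧸ moduleRad R M) ∈ Submodule.span R {x₀} :=
        hgen ▸ Submodule.mem_top
      obtain ⟨s, hs⟩ := Submodule.mem_span_singleton.mp this
      have hrad : m - s • x ∈ moduleRad R M := by
        rw [← Submodule.Quotient.mk_eq_zero, Submodule.Quotient.mk_sub,
          Submodule.Quotient.mk_smul, hx, hs, sub_self]
      have : m = (m - s • x) + s • x := by abel
      rw [this]
      exact Submodule.add_mem _ (Submodule.mem_sup_left hrad)
        (Submodule.mem_sup_right (Submodule.smul_mem _ s (Submodule.mem_span_singleton_self x)))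
    exact ⟨x, rad_superfluous _ hsup2⟩
end

section
/- Let R be a semiperfect ring and M a finitely generated left R-module whose top M/Rad(M) is square-free. Then M is cyclic. -/
open Submodule

section Aux

variable {R M : Type*} [Ring R] [AddCommGroup M] [Module R M]

lemma aux_coatomic [Module.Finite R M] : IsCoatomic (Submodule R M) :=
  CompleteLattice.coatomic_of_top_compact
    ((Submodule.fg_iff_compact ⊤).1 (Module.finite_def.mp ‹_›))

lemma aux_jac_smul_mem_coatom {j : R} (hj : j ∈ jacobsonRadical R) (x : M)
    {P : Submodule R M} (hP : IsCoatom P) : j • x ∈ P := by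
  have hs : IsSimpleModule R (M ⧸ P) := (isSimpleModule_iff_isCoatom).2 hP
  suffices h : P.mkQ (j • x) = 0 by
    rwa [Submodule.mkQ_apply, Submodule.Quotient.mk_eq_zero] at h
  rw [map_smul]
  set y := P.mkQ x with hy'
  by_cases hy : y = 0
  · rw [hy, smul_zero]
  · have hsurj : Function.Surjective (LinearMap.toSpanSingleton R (M ⧸ P) y) :=
      IsSimpleModule.toSpanSingleton_surjective R hy
    have hsimp : IsSimpleModule R
        (R ⧸ LinearMap.ker (LinearMap.toSpanSingleton R (M ⧸ P) y)) :=
      IsSimpleModule.congr (LinearMap.quotKerEquivOfSurjective _ hsurj)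
    have hmax : Ideal.IsMaximal (LinearMap.ker (LinearMap.toSpanSingleton R (M ⧸ P) y)) :=
      ⟨(isSimpleModule_iff_isCoatom).1 hsimp⟩
    have hjk : j ∈ LinearMap.ker (LinearMap.toSpanSingleton R (M ⧸ P) y) := by
      have := Ideal.mem_sInf.mp hj (I := LinearMap.ker (LinearMap.toSpanSingleton R (M ⧸ P) y))
      exact this ⟨bot_le, hmax⟩
    simpa [LinearMap.toSpanSingleton_apply] using hjk

lemma aux_semisimple_top (hR : IsSemisimpleModule R (R ⧸ jacobsonRadical R)) :
    IsSemisimpleModule R (M ⧸ moduleRad R M) := by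
  haveI := hR
  set N := M ⧸ moduleRad R M with hN
  apply isSemisimpleModule_of_isSemisimpleModule_submodule'
    (p := fun x : N => LinearMap.range (LinearMap.toSpanSingleton R N x))
  · intro x
    have hle : jacobsonRadical R ≤ LinearMap.ker (LinearMap.toSpanSingleton R N x) := by
      intro j hj
      rw [LinearMap.mem_ker, LinearMap.toSpanSingleton_apply]
      obtain ⟨m, rfl⟩ := (moduleRad R M).mkQ_surjective x
      rw [← map_smul, Submodule.mkQ_apply, Submodule.Quotient.mk_eq_zero]
      rw [moduleRad, Submodule.mem_sInf]
      intro P hP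
      exact aux_jac_smul_mem_coatom hj m hP
    have h1 : IsSemisimpleModule R
        (R ⧸ LinearMap.ker (LinearMap.toSpanSingleton R N x)) :=
      IsSemisimpleModule.congr
        (Submodule.quotientQuotientEquivQuotient (jacobsonRadical R) _ hle).symm
    exact IsSemisimpleModule.congr (LinearMap.quotKerEquivRange _).symm
  · rw [eq_top_iff]
    intro x _
    exact Submodule.mem_iSup_of_mem x ⟨1, one_smul R x⟩

lemma aux_cyclic_of_ss {R N : Type*} [Ring R] [AddCommGroup N] [Module R N]
    [Module.Finite R N] [IsSemisimpleModule R N]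
    (h : IsSquareFreeModule R N) : IsCyclicModule R N := by
  classical
  obtain ⟨s, hind, hsup, hsimple⟩ := IsSemisimpleModule.exists_sSupIndep_sSup_simples_eq_top R N
  have hcomp : IsCompactElement (⊤ : Submodule R N) :=
    (Submodule.fg_iff_compact ⊤).1 (Module.finite_def.mp ‹_›)
  obtain ⟨t, hts, htle⟩ := (CompleteLattice.isCompactElement_iff_exists_le_sSup_of_le_sSup _ _).1 hcomp s (le_of_eq hsup.symm)
  have htop : t.sup id = ⊤ := top_le_iff.mp htle
  have hatom : ∀ S ∈ t, IsAtom S := fun S hS =>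
    (isSimpleModule_iff_isAtom).1 (hsimple S (hts hS))
  have hex : ∀ S : {S // S ∈ t}, ∃ v : N, v ∈ S.1 ∧ v ≠ 0 := by
    intro S
    exact (Submodule.ne_bot_iff _).mp (hatom S.1 S.2).1
  choose f hf1 hf2 using hex
  set x : N := ∑ S ∈ t.attach, f S with hx
  refine ⟨x, ?_⟩
  by_contra hne
  haveI : IsCoatomic (Submodule R N) := aux_coatomic
  obtain ⟨P, hP, hle⟩ := (eq_top_or_exists_le_coatom (Submodule.span R {x})).resolve_left hne
  have hxP : x ∈ P := hle (Submodule.mem_span_singleton_self x)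
  -- find j ∈ t not contained in P
  have hexj : ∃ j ∈ t, ¬ j ≤ P := by
    by_contra hall
    push_neg at hall
    exact hP.1 (top_le_iff.mp (htop ▸ Finset.sup_le hall))
  obtain ⟨j, hjt, hjP⟩ := hexj
  have hinfj : P ⊓ j = ⊥ := by
    refine (hatom j hjt).2 _ (lt_of_le_of_ne inf_le_right ?_)
    intro heq
    exact hjP (heq ▸ inf_le_left)
  have hsupj : P ⊔ j = ⊤ := by
    refine hP.2 _ (lt_of_le_of_ne le_sup_left ?_)
    intro heq
    exact hjP (le_sup_right.trans heq.ge)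
  have hcompl : IsCompl P j := IsCompl.of_eq hinfj hsupj
  let e := P.quotientEquivOfIsCompl j hcompl
  -- every other S ∈ t is contained in P
  have hkey : ∀ S ∈ t, S ≠ j → S ≤ P := by
    intro S hSt hSj
    by_contra hnle
    have hinfS : P ⊓ S = ⊥ := by
      refine (hatom S hSt).2 _ (lt_of_le_of_ne inf_le_right ?_)
      intro heq
      exact hnle (heq ▸ inf_le_left)
    let g : S →ₗ[R] N := j.subtype ∘ₗ (e.toLinearMap ∘ₗ (P.mkQ ∘ₗ S.subtype))
    have hginj : Function.Injective g := by
      intro a b hab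
      apply Subtype.ext
      have h1 : P.mkQ (a : N) = P.mkQ (b : N) := e.injective (Subtype.ext hab)
      have h2 : (a : N) - b ∈ P := by
        rw [Submodule.mkQ_apply, Submodule.mkQ_apply] at h1
        exact (Submodule.Quotient.eq P).mp h1
      have h3 : (a : N) - b ∈ P ⊓ S := ⟨h2, sub_mem a.2 b.2⟩
      rw [hinfS] at h3
      exact sub_eq_zero.mp h3
    have hBj : LinearMap.range g ≤ j := by
      rintro _ ⟨v, rfl⟩
      exact SetLike.coe_mem _
    have hSj' : S ⊓ j = ⊥ := by
      rw [← le_bot_iff]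
      have hd : Disjoint S (sSup (s \ {S})) := hind (hts hSt)
      have : j ≤ sSup (s \ {S}) := le_sSup ⟨hts hjt, fun h => hSj h.symm⟩
      exact le_trans (inf_le_inf_left S this) (hd.le_bot)
    have hSB : S ⊓ LinearMap.range g = ⊥ := by
      rw [← le_bot_iff, ← hSj']
      exact inf_le_inf_left S hBj
    have := h S (LinearMap.range g) hSB ⟨LinearEquiv.ofInjective g hginj⟩
    exact (hatom S hSt).1 this
  -- compute mkQ x
  have hfj : f ⟨j, hjt⟩ ∉ P := by
    intro hmem
    have : f ⟨j, hjt⟩ ∈ P ⊓ j := ⟨hmem, hf1 ⟨j, hjt⟩⟩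
    rw [hinfj] at this
    exact hf2 ⟨j, hjt⟩ this
  have hq : P.mkQ x = P.mkQ (f ⟨j, hjt⟩) := by
    rw [hx, map_sum]
    refine Finset.sum_eq_single_of_mem (f := fun S => P.mkQ (f S)) ⟨j, hjt⟩
      (Finset.mem_attach t _) ?_
    intro b _ hb
    have hbP : (b : Submodule R N) ≤ P :=
      hkey b b.2 (fun hbj => hb (Subtype.ext hbj))
    show P.mkQ (f b) = 0
    rw [Submodule.mkQ_apply, Submodule.Quotient.mk_eq_zero]
    exact hbP (hf1 b)
  have : P.mkQ x = 0 := by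
    rw [Submodule.mkQ_apply, Submodule.Quotient.mk_eq_zero]
    exact hxP
  rw [hq, Submodule.mkQ_apply, Submodule.Quotient.mk_eq_zero] at this
  exact hfj this

end Aux

theorem stmt5 {R M : Type*} [Ring R] [AddCommGroup M] [Module R M]
    (hR : IsSemiperfectRing R) [Module.Finite R M]
    (h : IsSquareFreeModule R (M ⧸ moduleRad R M)) :
    IsCyclicModule R M := by
  have hss : IsSemisimpleModule R (M ⧸ moduleRad R M) := aux_semisimple_top hR.1
  haveI : Module.Finite R (M ⧸ moduleRad R M) :=
    Module.Finite.of_surjective _ (moduleRad R M).mkQ_surjective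
  obtain ⟨y, hy⟩ := aux_cyclic_of_ss h
  obtain ⟨x, rfl⟩ := (moduleRad R M).mkQ_surjective y
  refine ⟨x, ?_⟩
  have hsup : moduleRad R M ⊔ Submodule.span R {x} = ⊤ := by
    rw [← Submodule.map_mkQ_eq_top, Submodule.map_span]
    simpa using hy
  haveI : IsCoatomic (Submodule R M) := aux_coatomic
  rcases eq_top_or_exists_le_coatom (Submodule.span R {x}) with ht | ⟨P, hP, hle⟩
  · exact ht
  · exfalso
    have hrad : moduleRad R M ≤ P := sInf_le hP
    exact hP.1 (top_le_iff.mp (hsup ▸ sup_le hrad hle))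
end

section
/- If R is a left perfect ring and every left R-module is a direct sum of modules with cyclic top, then R is a left Köthe ring, i.e., every left R-module is a direct sum of cyclic modules. -/
open Submodule

universe u


section Aux

variable {R : Type*} [Ring R]

/-- Nakayama's lemma for left T-nilpotent ideals: if `J • M = M` then `M = 0`. -/
lemma tnilpotent_nakayama {M : Type*} [AddCommGroup M] [Module R M]
    (hT : IsLeftTNilpotent ((jacobsonRadical R : Ideal R) : Set R))
    (hJM : (⊤ : Submodule R M) ≤ (jacobsonRadical R) • (⊤ : Submodule R M))
    (x : M) : x = 0 := by
  classical
  set J := jacobsonRadical R with hJ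
  by_contra hx
  have C : ∀ (r : R) (y : M), r • y ≠ 0 → ∃ a, a ∈ J ∧ ∃ z : M, (r * a) • z ≠ 0 := by
    intro r y hy
    have hyJ : y ∈ J • (⊤ : Submodule R M) := hJM trivial
    refine Submodule.smul_induction_on
      (p := fun y => r • y ≠ 0 → ∃ a, a ∈ J ∧ ∃ z : M, (r * a) • z ≠ 0) hyJ ?_ ?_ hy
    · intro a ha n _ h
      exact ⟨a, ha, n, by rwa [mul_smul]⟩
    · intro y z hy' hz' h
      by_cases h1 : r • y = 0
      · exact hz' (by rwa [smul_add, h1, zero_add] at h)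
      · exact hy' h1
  let F : R × M → R × M := fun p =>
    if h : p.1 • p.2 ≠ 0 then
      ⟨p.1 * (C p.1 p.2 h).choose, ((C p.1 p.2 h).choose_spec.2).choose⟩
    else ⟨0, 0⟩
  let g : ℕ → R × M := fun n => F^[n] (1, x)
  have hg : ∀ n, (g n).1 • (g n).2 ≠ 0 := by
    intro n
    induction n with
    | zero => simpa [g] using hx
    | succ n ih =>
      have hgs : g (n + 1) = F (g n) := by
        simp only [g, Function.iterate_succ_apply']
      rw [hgs]
      simp only [F, dif_pos ih]
      exact ((C _ _ ih).choose_spec.2).choose_spec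
  let a : ℕ → R := fun n =>
    if h : (g n).1 • (g n).2 ≠ 0 then (C (g n).1 (g n).2 h).choose else 0
  have haJ : ∀ n, a n ∈ J := by
    intro n
    simp only [a, dif_pos (hg n)]
    exact (C _ _ (hg n)).choose_spec.1
  have hprod : ∀ n, (g n).1 = ((List.range n).map a).prod := by
    intro n
    induction n with
    | zero => simp [g]
    | succ n ih =>
      have hgs : g (n + 1) = F (g n) := by
        simp only [g, Function.iterate_succ_apply']
      rw [hgs]
      simp only [F, dif_pos (hg n)]
      rw [List.range_succ, List.map_append, List.prod_append]
      simp only [List.map_cons, List.map_nil, List.prod_cons, List.prod_nil, mul_one]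
      rw [← ih]
      simp only [a, dif_pos (hg n)]
  obtain ⟨n, hn⟩ := hT a haJ
  exact hg (n + 1) (by rw [hprod (n + 1), hn, zero_smul])

/-- The quotient of any module by `J • ⊤` is semisimple when `R/J` is. -/
lemma isSemisimple_quotient_jsmul {M : Type*} [AddCommGroup M] [Module R M]
    (hss : IsSemisimpleModule R (R ⧸ jacobsonRadical R)) :
    IsSemisimpleModule R (M ⧸ (jacobsonRadical R • ⊤ : Submodule R M)) := by
  haveI := hss
  set J := jacobsonRadical R with hJ
  set Q := M ⧸ (J • ⊤ : Submodule R M) with hQ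
  have hspan : ∀ x : Q, IsSemisimpleModule R (Submodule.span R {x}) := by
    intro x
    have hJle : (J : Submodule R R) ≤ Ideal.torsionOf R Q x := by
      intro a ha
      rw [Ideal.mem_torsionOf_iff]
      obtain ⟨m, rfl⟩ := Submodule.Quotient.mk_surjective _ x
      rw [← Submodule.Quotient.mk_smul, Submodule.Quotient.mk_eq_zero]
      exact Submodule.smul_mem_smul ha trivial
    let f : (R ⧸ (J : Submodule R R)) →ₗ[R] (R ⧸ Ideal.torsionOf R Q x) :=
      Submodule.mapQ _ _ LinearMap.id hJle
    have hfsurj : Function.Surjective f := by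
      intro y
      obtain ⟨r, rfl⟩ := Submodule.Quotient.mk_surjective _ y
      exact ⟨Submodule.Quotient.mk r, rfl⟩
    haveI h1 : IsSemisimpleModule R (R ⧸ Ideal.torsionOf R Q x) :=
      IsSemisimpleModule.congr (LinearMap.quotKerEquivOfSurjective f hfsurj).symm
    exact IsSemisimpleModule.congr (Ideal.quotTorsionOfEquivSpanSingleton R Q x).symm
  refine isSemisimpleModule_of_isSemisimpleModule_submodule'
    (p := fun x : Q => Submodule.span R {x}) hspan ?_
  rw [eq_top_iff]
  intro y _
  exact le_iSup (fun x : Q => Submodule.span R {x}) y (Submodule.mem_span_singleton_self y)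

/-- Pulling back a coatom along the quotient map gives a coatom. -/
lemma isCoatom_comap_mkQ {M : Type*} [AddCommGroup M] [Module R M]
    (p : Submodule R M) {C : Submodule R (M ⧸ p)} (hC : IsCoatom C) :
    IsCoatom (Submodule.comap p.mkQ C) := by
  have hsurj : Function.Surjective p.mkQ := p.mkQ_surjective
  constructor
  · intro htop
    apply hC.1
    have := Submodule.map_comap_eq_of_surjective hsurj C
    rw [htop, Submodule.map_top, Submodule.range_mkQ] at this
    exact this.symm
  · intro D hD
    have hmap : C ≤ Submodule.map p.mkQ D := by
      rw [← Submodule.map_comap_eq_of_surjective hsurj C]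
      exact Submodule.map_mono hD.le
    have hne : Submodule.map p.mkQ D ≠ C := by
      intro heq
      have h1 : D ≤ Submodule.comap p.mkQ C := by
        rw [← heq]
        exact Submodule.le_comap_map _ _
      exact absurd h1 (not_le_of_gt hD)
    have htop : Submodule.map p.mkQ D = ⊤ := hC.2 _ (lt_of_le_of_ne hmap (Ne.symm hne))
    have hker : p ≤ D := le_trans (fun x hx => by
        show p.mkQ x ∈ C
        rw [show p.mkQ x = 0 from (Submodule.Quotient.mk_eq_zero p).2 hx]
        exact C.zero_mem) hD.le
    rw [Submodule.map_mkQ_eq_top] at htop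
    rwa [sup_eq_right.mpr hker] at htop

/-- Over a left perfect ring, every nonzero module has a maximal submodule. -/
lemma exists_coatom_of_nonzero {M : Type*} [AddCommGroup M] [Module R M]
    (hperf : IsLeftPerfectRing R) (hnt : ∃ x : M, x ≠ 0) :
    ∃ N : Submodule R M, IsCoatom N := by
  set J := jacobsonRadical R with hJ
  set JM : Submodule R M := J • ⊤ with hJM
  have hJMne : JM ≠ ⊤ := by
    intro htop
    obtain ⟨x, hx⟩ := hnt
    exact hx (tnilpotent_nakayama hperf.2 (le_of_eq htop.symm) x)
  haveI hss : IsSemisimpleModule R (M ⧸ JM) := isSemisimple_quotient_jsmul hperf.1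
  haveI hntQ : Nontrivial (M ⧸ JM) :=
    Submodule.Quotient.nontrivial_iff.mpr hJMne
  -- find an atom in the semisimple quotient
  have htop := IsSemisimpleModule.sSup_simples_eq_top R (M ⧸ JM)
  have hA : ∃ A : Submodule R (M ⧸ JM), IsAtom A := by
    by_contra hno
    push_neg at hno
    have hempty : {m : Submodule R (M ⧸ JM) | IsSimpleModule R m} = ∅ := by
      ext m
      simp only [Set.mem_setOf_eq, Set.mem_empty_iff_false, iff_false]
      rw [isSimpleModule_iff_isAtom]
      exact hno m
    rw [hempty, sSup_empty] at htop
    exact bot_ne_top htop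
  obtain ⟨A, hA⟩ := hA
  obtain ⟨C, hcompl⟩ := exists_isCompl A
  have hCA : A ⊔ C = ⊤ := hcompl.sup_eq_top
  have hAC : A ⊓ C = ⊥ := hcompl.inf_eq_bot
  have hCcoatom : IsCoatom C := by
    constructor
    · intro htop'
      apply hA.1
      rw [← hAC, htop', inf_top_eq]
    · intro D hD
      have h2 : (C ⊔ A) ⊓ D = C ⊔ A ⊓ D := sup_inf_assoc_of_le A hD.le
      rw [sup_comm C A, hCA, top_inf_eq] at h2
      rcases hA.le_iff.mp (inf_le_left : A ⊓ D ≤ A) with h3 | h3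
      · rw [h3, sup_bot_eq] at h2
        exact absurd h2 (ne_of_gt hD)
      · rw [h3, sup_comm] at h2
        rw [h2, hCA]
  exact ⟨Submodule.comap JM.mkQ C, isCoatom_comap_mkQ JM hCcoatom⟩

/-- Over a left perfect ring, a module with cyclic top is cyclic. -/
lemma isCyclic_of_hasCyclicTop {M : Type*} [AddCommGroup M] [Module R M]
    (hperf : IsLeftPerfectRing R) (hct : HasCyclicTop R M) : IsCyclicModule R M := by
  obtain ⟨mb, hmb⟩ := hct
  obtain ⟨m, rfl⟩ := Submodule.Quotient.mk_surjective (moduleRad R M) mb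
  refine ⟨m, ?_⟩
  by_contra hne
  -- `span {m} ⊔ rad M = ⊤`
  have hmap : Submodule.map (moduleRad R M).mkQ (Submodule.span R {m}) = ⊤ := by
    rw [Submodule.map_span, Set.image_singleton]
    exact hmb
  have hsup : moduleRad R M ⊔ Submodule.span R {m} = ⊤ := by
    rw [← Submodule.comap_map_mkQ (moduleRad R M) (Submodule.span R {m}), hmap,
      Submodule.comap_top]
  -- the quotient by `span {m}` is nonzero, so it has a coatom
  have hnt : ∃ x : M ⧸ Submodule.span R {m}, x ≠ 0 := by
    haveI : Nontrivial (M ⧸ Submodule.span R {m}) :=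
      Submodule.Quotient.nontrivial_iff.mpr hne
    obtain ⟨x, y, hxy⟩ := exists_pair_ne (M ⧸ Submodule.span R {m})
    by_cases hx : x = 0
    · exact ⟨y, fun hy => hxy (by rw [hx, hy])⟩
    · exact ⟨x, hx⟩
  obtain ⟨C, hC⟩ := exists_coatom_of_nonzero hperf hnt
  have hN : IsCoatom (Submodule.comap (Submodule.span R {m}).mkQ C) :=
    isCoatom_comap_mkQ _ hC
  have hrad : moduleRad R M ≤ Submodule.comap (Submodule.span R {m}).mkQ C :=
    sInf_le hN
  have hspan : Submodule.span R {m} ≤ Submodule.comap (Submodule.span R {m}).mkQ C := by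
    intro x hx
    show (Submodule.span R {m}).mkQ x ∈ C
    rw [show (Submodule.span R {m}).mkQ x = 0 from
      (Submodule.Quotient.mk_eq_zero (Submodule.span R {m})).2 hx]
    exact C.zero_mem
  exact hN.1 (top_le_iff.1 (hsup ▸ sup_le hrad hspan))

end Aux

theorem stmt7 {R : Type u} [Ring R] (hperf : IsLeftPerfectRing R)
    (h : ∀ (M : Type u) [AddCommGroup M] [Module R M],
      ∃ (ι : Type u) (N : ι → Submodule R M), iSupIndep N ∧ iSup N = ⊤ ∧
        ∀ i, HasCyclicTop R (N i)) :
    ∀ (M : Type u) [AddCommGroup M] [Module R M],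
      ∃ (ι : Type u) (N : ι → Submodule R M), iSupIndep N ∧ iSup N = ⊤ ∧
        ∀ i, IsCyclicModule R (N i) := by
  intro M _ _
  obtain ⟨ι, N, hind, hsup, hct⟩ := h M
  exact ⟨ι, N, hind, hsup, fun i => isCyclic_of_hasCyclicTop hperf (hct i)⟩
end

section
/- Let R be a left quasi-duo ring with only finitely many isomorphism classes of simple left R-modules. If P₁ and P₂ are distinct maximal left ideals of R, then R/P₁ and R/P₂ are non-isomorphic as left R-modules, and R/J(R) is a finite direct product of division rings. -/
open Submodule

universe u

section Aux
variable {R : Type u} [Ring R]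

/-- two-sided ideal from a left ideal closed under right multiplication -/
def myTSI (Q : Ideal R) (hm : ∀ r x : R, x ∈ Q → x * r ∈ Q) : TwoSidedIdeal R :=
  TwoSidedIdeal.mk' Q Q.zero_mem (fun hx hy => Q.add_mem hx hy) (fun hx => Q.neg_mem hx)
    (fun hy => Q.mul_mem_left _ hy) (fun {x y} hx => hm y x hx)

lemma myTSI_rel (Q : Ideal R) (hm : ∀ r x : R, x ∈ Q → x * r ∈ Q) (a b : R) :
    (myTSI Q hm).ringCon a b ↔ a - b ∈ Q := Iff.rfl

lemma myTSI_coe_eq (Q : Ideal R) (hm) (a b : R) :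
    (a : (myTSI Q hm).ringCon.Quotient) = b ↔ a - b ∈ Q := by
  rw [RingCon.eq]; exact Iff.rfl

lemma ann_iff (P : Ideal R) (hm : ∀ r x : R, x ∈ P → x * r ∈ P) (a : R) :
    (∀ m : R ⧸ P, a • m = 0) ↔ a ∈ P := by
  constructor
  · intro h
    have := h (Submodule.Quotient.mk 1)
    rw [← Submodule.Quotient.mk_smul, smul_eq_mul, mul_one,
      Submodule.Quotient.mk_eq_zero] at this
    exact this
  · intro ha m
    obtain ⟨x, rfl⟩ := Submodule.Quotient.mk_surjective P m
    rw [← Submodule.Quotient.mk_smul, smul_eq_mul, Submodule.Quotient.mk_eq_zero]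
    exact hm x a ha

lemma coatom_sup_inf (hqd : ∀ P : Ideal R, IsCoatom P → ∀ r x : R, x ∈ P → x * r ∈ P)
    (P : Ideal R) (hP : IsCoatom P) (T : Finset (Ideal R))
    (hT : ∀ Q ∈ T, IsCoatom Q) (hPT : P ∉ T) : P ⊔ T.inf id = ⊤ := by
  classical
  induction T using Finset.induction with
  | empty => simp
  | @insert a s ha ih =>
    have hPa : P ≠ a := fun h => hPT (h ▸ Finset.mem_insert_self a s)
    have haco : IsCoatom a := hT a (Finset.mem_insert_self a s)
    have h2 : P ⊔ a = ⊤ := by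
      by_cases hle : a ≤ P
      · exact absurd (haco.2 P (lt_of_le_of_ne hle (Ne.symm hPa))) hP.1
      · obtain ⟨x, hxa, hxP⟩ := Set.not_subset.1 hle
        exact hP.2 _ (lt_of_le_of_ne le_sup_left
          (fun h => hxP (h ▸ Submodule.mem_sup_right hxa)))
    have h1 : P ⊔ s.inf id = ⊤ :=
      ih (fun Q hQ => hT Q (Finset.mem_insert_of_mem hQ))
        (fun h => hPT (Finset.mem_insert_of_mem h))
    rw [Finset.inf_insert, id]
    rw [Ideal.eq_top_iff_one] at h1 h2 ⊢
    obtain ⟨p, hp, b, hb, hpb⟩ := Submodule.mem_sup.1 h1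
    obtain ⟨c, hc, d, hd, hcd⟩ := Submodule.mem_sup.1 h2
    have key : (1 : R) = (p * c + p * d + b * c) + b * d := by
      have : (1 : R) = (p + b) * (c + d) := by rw [hpb, hcd, one_mul]
      rw [this]; noncomm_ring
    rw [key]
    refine Submodule.add_mem_sup ?_ (Submodule.mem_inf.2 ⟨Ideal.mul_mem_left a b hd, ?_⟩)
    · exact P.add_mem (P.add_mem (hqd P hP c p hp) (hqd P hP d p hp)) (P.mul_mem_left b hc)
    · exact Submodule.mem_finsetInf.2 fun Q hQ =>
        hqd Q (hT Q (Finset.mem_insert_of_mem hQ)) d b (Submodule.mem_finsetInf.1 hb Q hQ)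

noncomputable def coatomQuotDR (Q : Ideal R) (hQ : IsCoatom Q)
    (hm : ∀ r x : R, x ∈ Q → x * r ∈ Q) :
    DivisionRing (myTSI Q hm).ringCon.Quotient := by
  have hnt : Nontrivial (myTSI Q hm).ringCon.Quotient := by
    refine ⟨(1 : R), (0 : R), fun h => ?_⟩
    rw [myTSI_coe_eq] at h
    exact hQ.1 ((Ideal.eq_top_iff_one Q).2 (by simpa using h))
  -- every nonzero element has a left inverse
  have hlinv : ∀ q : (myTSI Q hm).ringCon.Quotient, q ≠ 0 → ∃ w, w * q = 1 := by
    intro q hq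
    obtain ⟨r, rfl⟩ : ∃ r : R, (r : (myTSI Q hm).ringCon.Quotient) = q :=
      Quotient.exists_rep q
    have hrQ : r ∉ Q := by
      intro hr
      exact hq (by rw [← RingCon.coe_zero, myTSI_coe_eq]; simpa using hr)
    have htop : Q ⊔ Submodule.span R {r} = ⊤ :=
      hQ.2 _ (lt_of_le_of_ne le_sup_left (fun h => hrQ
        (h ▸ Submodule.mem_sup_right (Submodule.mem_span_singleton_self r))))
    obtain ⟨p, hp, t, ht, hpt⟩ := Submodule.mem_sup.1
      ((Ideal.eq_top_iff_one _).1 htop)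
    obtain ⟨z, hz⟩ := Submodule.mem_span_singleton.1 ht
    refine ⟨(z : R), ?_⟩
    rw [← RingCon.coe_one, ← RingCon.coe_mul, myTSI_coe_eq]
    have : z * r - 1 = -p := by
      rw [smul_eq_mul] at hz; rw [hz, ← hpt]; abel
    rw [this]; exact Q.neg_mem hp
  refine DivisionRing.ofIsUnitOrEqZero (fun q => ?_)
  by_cases hq : q = 0
  · exact Or.inr hq
  · obtain ⟨w, hw⟩ := hlinv q hq
    have hw0 : w ≠ 0 := by rintro rfl; rw [zero_mul] at hw; exact zero_ne_one hw
    obtain ⟨z, hz⟩ := hlinv w hw0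
    have hzq : z = q := by
      calc z = z * (w * q) := by rw [hw, mul_one]
      _ = (z * w) * q := by rw [mul_assoc]
      _ = q := by rw [hz, one_mul]
    exact Or.inl ⟨⟨q, w, by rw [← hzq]; exact hz, hw⟩, rfl⟩

end Aux

theorem stmt11 {R : Type u} [Ring R]
    (hqd : ∀ P : Ideal R, IsCoatom P → ∀ r x : R, x ∈ P → x * r ∈ P)
    (n : ℕ) (f : Fin n → Ideal R) (hf : ∀ i, IsCoatom (f i))
    (hfin : ∀ P : Ideal R, IsCoatom P → ∃ i, Nonempty ((R ⧸ P) ≃ₗ[R] (R ⧸ f i))) :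
    (∀ P₁ P₂ : Ideal R, IsCoatom P₁ → IsCoatom P₂ → P₁ ≠ P₂ →
        IsEmpty ((R ⧸ P₁) ≃ₗ[R] (R ⧸ P₂))) ∧
    ∃ (m : ℕ) (D : Fin m → Type u) (inst : ∀ i, DivisionRing (D i)),
      letI := inst
      ∃ g : R →+* ((i : Fin m) → D i), Function.Surjective g ∧
        RingHom.ker g = jacobsonRadical R := by
  classical
  have part1 : ∀ P₁ P₂ : Ideal R, IsCoatom P₁ → IsCoatom P₂ → P₁ ≠ P₂ →
      IsEmpty ((R ⧸ P₁) ≃ₗ[R] (R ⧸ P₂)) := by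
    intro P₁ P₂ h₁ h₂ hne
    refine ⟨fun φ => hne ?_⟩
    ext a
    rw [← ann_iff P₁ (hqd P₁ h₁) a, ← ann_iff P₂ (hqd P₂ h₂) a]
    constructor
    · intro h m
      obtain ⟨m', rfl⟩ := φ.surjective m
      rw [← map_smul, h, map_zero]
    · intro h m
      apply φ.injective
      rw [map_smul, map_zero, h]
  refine ⟨part1, ?_⟩
  have hcover : ∀ P : Ideal R, IsCoatom P → ∃ i, P = f i := by
    intro P hP
    obtain ⟨i, ⟨φ⟩⟩ := hfin P hP
    exact ⟨i, by_contra fun hne => (part1 P (f i) hP (hf i) hne).false φ⟩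
  have hSfin : {P : Ideal R | IsCoatom P}.Finite :=
    (Set.finite_range f).subset (fun P hP => by
      obtain ⟨i, rfl⟩ := hcover P hP; exact ⟨i, rfl⟩)
  set S := hSfin.toFinset with hS
  have hmemS : ∀ P : Ideal R, P ∈ S ↔ IsCoatom P := fun P => hSfin.mem_toFinset
  let e : Fin S.card ≃ S := S.equivFin.symm
  let P : Fin S.card → Ideal R := fun i => (e i : Ideal R)
  have hPco : ∀ i, IsCoatom (P i) := fun i => (hmemS _).1 (e i).2
  have hPinj : Function.Injective P := fun i j h => e.injective (Subtype.ext h)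
  have hPsurj : ∀ Q ∈ S, ∃ i, P i = Q := fun Q hQ =>
    ⟨e.symm ⟨Q, hQ⟩, by simp [P]⟩
  refine ⟨S.card, fun i => (myTSI (P i) (hqd _ (hPco i))).ringCon.Quotient,
    fun i => coatomQuotDR (P i) (hPco i) _,
    Pi.ringHom (fun i => RingCon.mk' _), ?_, ?_⟩
  · intro d
    choose r hr using fun i => Quotient.exists_rep (d i)
    have he : ∀ i : Fin S.card, ∃ b : R, (1 - b) ∈ P i ∧ ∀ j, j ≠ i → b ∈ P j := by
      intro i
      have key : P i ⊔ ((Finset.univ.erase i).image P).inf id = ⊤ := by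
        refine coatom_sup_inf hqd (P i) (hPco i) _ ?_ ?_
        · intro Q hQ; obtain ⟨j, _, rfl⟩ := Finset.mem_image.1 hQ; exact hPco j
        · intro h; obtain ⟨j, hj, hji⟩ := Finset.mem_image.1 h
          exact (Finset.mem_erase.1 hj).1 (hPinj hji)
      obtain ⟨p, hp, b, hb, hpb⟩ := Submodule.mem_sup.1 ((Ideal.eq_top_iff_one _).1 key)
      refine ⟨b, by rw [← hpb]; simpa using hp, fun j hji => ?_⟩
      exact Submodule.mem_finsetInf.1 hb (P j)
        (Finset.mem_image_of_mem P (Finset.mem_erase.2 ⟨hji, Finset.mem_univ j⟩))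
    choose b hb1 hb2 using he
    refine ⟨∑ i, r i * b i, funext fun k => ?_⟩
    show ((∑ i, r i * b i : R) : (myTSI (P k) _).ringCon.Quotient) = d k
    rw [← hr k]
    refine (myTSI_coe_eq (P k) (hqd _ (hPco k)) _ (r k)).2 ?_
    have hsplit : (∑ i, r i * b i) - r k
        = (∑ i ∈ Finset.univ.erase k, r i * b i) + (r k * b k - r k) := by
      rw [← Finset.sum_erase_add _ _ (Finset.mem_univ k)]; abel
    rw [hsplit]
    refine (P k).add_mem (Submodule.sum_mem _ fun j hj =>
      Ideal.mul_mem_left _ _ (hb2 j k (Finset.mem_erase.1 hj).1.symm)) ?_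
    have : r k * b k - r k = -(r k * (1 - b k)) := by noncomm_ring
    rw [this]
    exact (P k).neg_mem (Ideal.mul_mem_left _ _ (hb1 k))
  · unfold jacobsonRadical
    ext x
    rw [RingHom.mem_ker]
    have hx : (Pi.ringHom fun i => RingCon.mk' (myTSI (P i) (hqd _ (hPco i))).ringCon) x = 0
        ↔ ∀ i, x ∈ P i := by
      rw [funext_iff]
      refine forall_congr' fun i => ?_
      show (x : (myTSI (P i) _).ringCon.Quotient) = 0 ↔ _
      rw [← RingCon.coe_zero, myTSI_coe_eq]
      simp
    refine hx.trans ?_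
    rw [Ideal.jacobson, Ideal.mem_sInf]
    constructor
    · intro h J hJ
      obtain ⟨i, rfl⟩ := hPsurj J ((hmemS J).2 (Ideal.isMaximal_def.1 hJ.2))
      exact h i
    · intro h i
      exact h ⟨bot_le, Ideal.isMaximal_def.2 (hPco i)⟩
end

section
/- Let R be a left Artinian left quasi-duo ring and M a cyclic left R-module. Then top(M) = M/Rad(M) is square-free. -/
open Submodule

universe u

theorem stmt12 {R : Type u} [Ring R] [IsArtinianRing R]
    (hqd : ∀ P : Ideal R, IsCoatom P → ∀ r x : R, x ∈ P → x * r ∈ P)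
    {M : Type u} [AddCommGroup M] [Module R M] (hM : IsCyclicModule R M) :
    IsSquareFreeModule R (M ⧸ moduleRad R M) := by
  classical
  obtain ⟨g, hg⟩ := hM
  have hgsurj : Function.Surjective (LinearMap.toSpanSingleton R M g) := by
    rw [← LinearMap.range_eq_top, ← LinearMap.span_singleton_eq_range, hg]
  haveI : IsArtinian R M := isArtinian_of_surjective R _ hgsurj
  set T := M ⧸ moduleRad R M with hT
  haveI : IsArtinian R T := inferInstance
  haveI : IsAtomic (Submodule R T) := isAtomic_of_orderBot_wellFounded_lt wellFounded_lt
  rintro A B hAB ⟨φ⟩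
  by_contra hA
  obtain ⟨a, haA, ha0⟩ := Submodule.ne_bot_iff A |>.mp hA
  -- find an atom S ≤ span {a}
  obtain hbot | ⟨S, hSatom, hSle⟩ := (IsAtomic.eq_bot_or_exists_atom_le (Submodule.span R {a}))
  · exact ha0 (by simpa using (Submodule.span_singleton_eq_bot.mp hbot))
  obtain ⟨s, hsS, hs0⟩ := Submodule.ne_bot_iff S |>.mp hSatom.1
  have hsA : s ∈ A := (le_trans hSle (Submodule.span_le.mpr (by simpa using haA))) hsS
  -- m = annihilator of s
  set m : Ideal R := LinearMap.ker (LinearMap.toSpanSingleton R T s) with hm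
  have hmem_m : ∀ c : R, c ∈ m ↔ c • s = 0 := fun c => by
    simp [hm, LinearMap.mem_ker, LinearMap.toSpanSingleton_apply]
  -- m is a coatom (maximal left ideal)
  have hmco : IsCoatom m := by
    constructor
    · intro h
      have : (1 : R) ∈ m := h ▸ Submodule.mem_top
      rw [hmem_m, one_smul] at this
      exact hs0 this
    · intro I hI
      obtain ⟨r, hrI, hrm⟩ := SetLike.exists_of_lt hI
      have hrs0 : r • s ≠ 0 := fun h => hrm ((hmem_m r).mpr h)
      have hspan : Submodule.span R {r • s} = S := by
        rcases lt_or_eq_of_le (Submodule.span_le.mpr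
          (Set.singleton_subset_iff.mpr (S.smul_mem r hsS))) with h | h
        · exact absurd (hSatom.2 _ h)
            (fun hb => hrs0 (Submodule.span_singleton_eq_bot.mp hb))
        · exact h
      have : s ∈ Submodule.span R {r • s} := hspan ▸ hsS
      obtain ⟨c, hc⟩ := Submodule.mem_span_singleton.mp this
      rw [eq_top_iff]
      intro u _
      have h1 : u - u * c * r ∈ m := by
        rw [hmem_m, sub_smul]
        have : (u * c * r) • s = u • (c • (r • s)) := by
          rw [mul_smul, mul_smul]
        rw [this, hc, sub_self]
      have h2 : u * c * r ∈ I := by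
        have := I.smul_mem (u * c) hrI
        simpa [smul_eq_mul, mul_assoc] using this
      have := I.add_mem (hI.le h1) h2
      simpa using this
  -- for a coatom N of M, the left ideal mN N
  set mN : Submodule R M → Ideal R := fun N => Submodule.comap (LinearMap.toSpanSingleton R M g) N
    with hmN
  have hmem_mN : ∀ N (c : R), c ∈ mN N ↔ c • g ∈ N := fun N c => by
    simp [hmN, Submodule.mem_comap, LinearMap.toSpanSingleton_apply]
  have hmNco : ∀ N : Submodule R M, IsCoatom N → IsCoatom (mN N) := by
    intro N hN
    constructor
    · intro h
      have : (1 : R) ∈ mN N := h ▸ Submodule.mem_top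
      rw [hmem_mN, one_smul] at this
      exact hN.1 (top_le_iff.mp (hg ▸ Submodule.span_le.mpr (by simpa using this)))
    · intro I hI
      obtain ⟨r, hrI, hrm⟩ := SetLike.exists_of_lt hI
      have hrg : r • g ∉ N := fun h => hrm ((hmem_mN N r).mpr h)
      have hsup : N ⊔ Submodule.span R {r • g} = ⊤ := by
        refine hN.2 _ (lt_of_le_of_ne le_sup_left ?_)
        intro h
        exact hrg (h ▸ Submodule.mem_sup_right (Submodule.mem_span_singleton_self _))
      have hgmem : g ∈ N ⊔ Submodule.span R {r • g} := hsup ▸ Submodule.mem_top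
      obtain ⟨n, hn, z, hz, hnz⟩ := Submodule.mem_sup.mp hgmem
      obtain ⟨c, hc⟩ := Submodule.mem_span_singleton.mp hz
      rw [eq_top_iff]
      intro u _
      have h1 : u - u * c * r ∈ mN N := by
        rw [hmem_mN, sub_smul]
        have : (u * c * r) • g = u • (c • (r • g)) := by rw [mul_smul, mul_smul]
        rw [this, hc]
        have : u • g - u • z = u • (g - z) := (smul_sub u g z).symm
        rw [this]
        have : g - z = n := by rw [← hnz]; abel
        rw [this]
        exact N.smul_mem u hn
      have h2 : u * c * r ∈ I := by
        have := I.smul_mem (u * c) hrI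
        simpa [smul_eq_mul, mul_assoc] using this
      have := I.add_mem (hI.le h1) h2
      simpa using this
  -- the image of g generates T
  set gb : T := (moduleRad R M).mkQ g with hgb
  have hgbspan : Submodule.span R {gb} = ⊤ := by
    rw [hgb, ← Set.image_singleton, ← Submodule.map_span, hg, Submodule.map_top,
      Submodule.range_mkQ]
  have hradle : ∀ N : Submodule R M, IsCoatom N → moduleRad R M ≤ N := fun N hN =>
    sInf_le hN
  have hmkQ_zero : ∀ x : M, (∀ N : Submodule R M, IsCoatom N → x ∈ N) →
      (moduleRad R M).mkQ x = 0 := by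
    intro x hx
    rw [Submodule.mkQ_apply, Submodule.Quotient.mk_eq_zero]
    exact Submodule.mem_sInf.mpr hx
  -- Claim A
  have claimA : ∀ r : R, (∀ a ∈ m, a • (r • gb) = 0) →
      ∀ N : Submodule R M, IsCoatom N → mN N ≠ m → r • g ∈ N := by
    intro r hr N hN hne
    have key : ∀ a ∈ m, (a * r) • g ∈ N := by
      intro a ham
      refine hradle N hN ?_
      rw [← Submodule.Quotient.mk_eq_zero, ← Submodule.mkQ_apply]
      have : (moduleRad R M).mkQ ((a * r) • g) = (a * r) • gb := by
        rw [hgb, map_smul]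
      rw [this, mul_smul]
      exact hr a ham
    have hsup : m ⊔ mN N = ⊤ := by
      by_contra h
      have hle : m ≤ m ⊔ mN N := le_sup_left
      rcases lt_or_eq_of_le hle with hlt | heq
      · exact h (hmco.2 _ hlt)
      · have : mN N ≤ m := by rw [heq]; exact le_sup_right
        rcases lt_or_eq_of_le this with hlt | heq2
        · exact hmco.1 ((hmNco N hN).2 _ hlt)
        · exact hne heq2
    have h1 : (1 : R) ∈ m ⊔ mN N := hsup ▸ Submodule.mem_top
    obtain ⟨x, hx, y, hy, hxy⟩ := Submodule.mem_sup.mp h1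
    have hr_eq : r = x * r + y * r := by rw [← add_mul, hxy, one_mul]
    have hxr : (x * r) • g ∈ N := key x hx
    have hyr : (y * r) • g ∈ N := (hmem_mN N _).mp (hqd (mN N) (hmNco N hN) r y hy)
    have : r • g = (x * r) • g + (y * r) • g := by rw [← add_smul, ← hr_eq]
    rw [this]
    exact N.add_mem hxr hyr
  -- express s and s' in terms of gb
  obtain ⟨rs, hrs⟩ := Submodule.mem_span_singleton.mp
    (hgbspan ▸ Submodule.mem_top (x := s))
  set s' : T := ((φ ⟨s, hsA⟩ : B) : T) with hs'
  have hs'B : s' ∈ B := (φ ⟨s, hsA⟩).2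
  have hs'0 : s' ≠ 0 := by
    intro h
    have : φ ⟨s, hsA⟩ = 0 := Subtype.ext h
    have := φ.injective (by rw [this, map_zero] : φ ⟨s, hsA⟩ = φ 0)
    exact hs0 (by simpa [Subtype.ext_iff] using this)
  have hms' : ∀ c ∈ m, c • s' = 0 := by
    intro c hc
    have hcs : c • s = 0 := (hmem_m c).mp hc
    have : c • (⟨s, hsA⟩ : A) = 0 := Subtype.ext (by simpa using hcs)
    rw [hs']
    have : c • φ ⟨s, hsA⟩ = 0 := by rw [← map_smul, this, map_zero]
    calc c • (φ ⟨s, hsA⟩ : T) = ((c • φ ⟨s, hsA⟩ : B) : T) := rfl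
    _ = 0 := by rw [this]; rfl
  obtain ⟨ru, hru⟩ := Submodule.mem_span_singleton.mp
    (hgbspan ▸ Submodule.mem_top (x := s'))
  have hms : ∀ c ∈ m, c • (rs • gb) = 0 := by
    intro c hc; rw [hrs]; exact (hmem_m c).mp hc
  have hms'2 : ∀ c ∈ m, c • (ru • gb) = 0 := by
    intro c hc; rw [hru]; exact hms' c hc
  -- rs ∉ m
  have hrsm : rs ∉ m := by
    intro hrsm
    have : ∀ N : Submodule R M, IsCoatom N → rs • g ∈ N := by
      intro N hN
      by_cases hcase : mN N = m
      · exact (hmem_mN N rs).mp (hcase ▸ hrsm)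
      · exact claimA rs hms N hN hcase
    have : rs • gb = 0 := by
      have h0 := hmkQ_zero (rs • g) this
      rw [map_smul] at h0
      exact h0
    exact hs0 (hrs.symm.trans this)
  -- m ⊔ span{rs} = ⊤
  have hsup : m ⊔ Submodule.span R {rs} = ⊤ := by
    refine hmco.2 _ (lt_of_le_of_ne le_sup_left ?_)
    intro h
    exact hrsm (h ▸ Submodule.mem_sup_right (Submodule.mem_span_singleton_self _))
  obtain ⟨d, hd, z, hz, hdz⟩ := Submodule.mem_sup.mp (hsup ▸ Submodule.mem_top (x := ru))
  obtain ⟨c, hc⟩ := Submodule.mem_span_singleton.mp hz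
  have hcz : z = c * rs := by rw [← hc]; rfl
  -- (ru - c * rs) • gb = 0
  have hkey : ∀ N : Submodule R M, IsCoatom N → (ru - c * rs) • g ∈ N := by
    intro N hN
    by_cases hcase : mN N = m
    · have : ru - c * rs ∈ m := by
        have : ru - c * rs = d := by rw [← hdz, hcz]; abel
        rw [this]; exact hd
      exact (hmem_mN N _).mp (hcase ▸ this)
    · have h1 : ru • g ∈ N := claimA ru hms'2 N hN hcase
      have h2 : rs • g ∈ N := claimA rs hms N hN hcase
      have h3 : (c * rs) • g ∈ N := by rw [mul_smul]; exact N.smul_mem c h2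
      rw [sub_smul]
      exact N.sub_mem h1 h3
  have h0 : (ru - c * rs) • gb = 0 := by
    have h0 := hmkQ_zero _ (hkey)
    rw [map_smul] at h0
    exact h0
  have heq : ru • gb = (c * rs) • gb := by
    have : ru • gb - (c * rs) • gb = 0 := by rw [← sub_smul]; exact h0
    exact sub_eq_zero.mp this
  have hfinal : s' = c • s := by rw [← hru, ← hrs, ← mul_smul]; exact heq
  have hs'A : s' ∈ A := hfinal ▸ A.smul_mem c hsA
  have : s' ∈ (⊥ : Submodule R T) := hAB ▸ Submodule.mem_inf.mpr ⟨hs'A, hs'B⟩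
  exact hs'0 (Submodule.mem_bot R |>.mp this)
end

section
/- Let R be a left Artinian ring. Then R is a finite direct product of local rings if and only if R is Abelian (every idempotent of R is central). -/
open Submodule

universe u

section MyAux


section Helpers
variable {R : Type u} [Ring R]

lemma my_mem_jacobson_left_inv {x : R} (hx : x ∈ Ideal.jacobson (⊥ : Ideal R)) :
    ∃ y : R, y * (1 - x) = 1 := by
  by_cases h : Ideal.span {(1 : R) - x} = ⊤
  · have h1 : (1:R) ∈ Ideal.span {(1:R) - x} := h ▸ Submodule.mem_top
    obtain ⟨y, hy⟩ := Submodule.mem_span_singleton.mp h1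
    exact ⟨y, by simpa [smul_eq_mul] using hy⟩
  · obtain ⟨M, hM, hle⟩ := Ideal.exists_le_maximal _ h
    have hxM : x ∈ M := by
      have hJ : Ideal.jacobson (⊥ : Ideal R) ≤ M := sInf_le ⟨bot_le, hM⟩
      exact hJ hx
    have h1x : (1:R) - x ∈ M := hle (Ideal.subset_span rfl)
    have h1 : (1:R) ∈ M := by simpa using M.add_mem h1x hxM
    exact absurd (M.eq_top_iff_one.mpr h1) hM.ne_top

lemma my_isNilpotent_of_mem_jacobson [IsArtinianRing R] {x : R}
    (hx : x ∈ Ideal.jacobson (⊥ : Ideal R)) : IsNilpotent x := by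
  let f : ℕ →o (Ideal R)ᵒᵈ :=
    ⟨fun n => Ideal.span {x ^ (n+1)}, by
      intro a b hab
      show Ideal.span {x ^ (b+1)} ≤ Ideal.span {x ^ (a+1)}
      rw [Ideal.span_le]
      rintro y rfl
      exact Submodule.mem_span_singleton.mpr
        ⟨x ^ (b - a), by rw [smul_eq_mul, ← pow_add]; congr 1; omega⟩⟩
  obtain ⟨n, hn⟩ := IsArtinian.monotone_stabilizes f
  have hmem : x ^ (n+1) ∈ Ideal.span {x ^ (n+2)} := by
    have h2 : Ideal.span {x ^ (n+1)} = Ideal.span {x ^ (n+2)} := hn (n+1) (Nat.le_succ n)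
    rw [← h2]
    exact Ideal.subset_span rfl
  obtain ⟨a, ha⟩ := Submodule.mem_span_singleton.mp hmem
  have hax : a * x ∈ Ideal.jacobson (⊥ : Ideal R) := Ideal.mul_mem_left _ a hx
  obtain ⟨y, hy⟩ := my_mem_jacobson_left_inv hax
  refine ⟨n+1, ?_⟩
  have h0 : (1 - a*x) * x^(n+1) = 0 := by
    rw [sub_mul, one_mul, sub_eq_zero]
    rw [smul_eq_mul] at ha
    calc x ^ (n+1) = a * x ^ (n+2) := ha.symm
    _ = a * (x * x^(n+1)) := by rw [pow_succ']
    _ = a * x * x^(n+1) := by rw [mul_assoc]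
  calc x^(n+1) = 1 * x^(n+1) := (one_mul _).symm
  _ = y * (1 - a*x) * x^(n+1) := by rw [hy]
  _ = y * ((1 - a*x) * x^(n+1)) := by rw [mul_assoc]
  _ = 0 := by rw [h0, mul_zero]

lemma my_jacobson_mul_mem_right {x : R}
    (hx : x ∈ Ideal.jacobson (⊥ : Ideal R)) (r : R) :
    x * r ∈ Ideal.jacobson (⊥ : Ideal R) := by
  rw [Ideal.jacobson] at hx ⊢
  rw [Ideal.mem_sInf] at hx ⊢
  rintro M ⟨-, hM⟩
  by_cases hr : r ∈ M
  · exact M.smul_mem x hr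
  · let φ : R →ₗ[R] R ⧸ M := M.mkQ.comp (LinearMap.toSpanSingleton R R r)
    haveI : IsSimpleModule R (R ⧸ M) := isSimpleModule_iff_isCoatom.mpr hM.out
    have hφ : φ ≠ 0 := by
      intro h
      apply hr
      have := congrArg (fun f => f 1) h
      simp only [φ, LinearMap.comp_apply, LinearMap.toSpanSingleton_apply,
        LinearMap.zero_apply, one_smul] at this
      exact (Submodule.Quotient.mk_eq_zero M).mp this
    have hsurj := LinearMap.surjective_of_ne_zero hφ
    have hker : Ideal.IsMaximal (LinearMap.ker φ) :=
      ⟨LinearMap.isCoatom_ker_of_surjective hsurj⟩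
    have hxk : x ∈ LinearMap.ker φ := hx ⟨bot_le, hker⟩
    have : φ x = 0 := hxk
    simp only [φ, LinearMap.comp_apply, LinearMap.toSpanSingleton_apply, smul_eq_mul,
      Submodule.mkQ_apply] at this
    exact (Submodule.Quotient.mk_eq_zero M).mp this

end Helpers
section P2x
variable {R : Type u} [Ring R]

lemma my_jacobson_eq_finset_inf [IsArtinianRing R] :
    ∃ s : Finset (Ideal R), (∀ I ∈ s, I.IsMaximal) ∧
      Ideal.jacobson (⊥ : Ideal R) = s.inf id := by
  classical
  let S : Set (Ideal R) :=
    {I : Ideal R | ∃ s : Finset (Ideal R), (∀ M ∈ s, M.IsMaximal) ∧ I = s.inf id}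
  obtain ⟨I₀, hI₀S, hmin⟩ := IsArtinian.set_has_minimal S
    ⟨⊤, ∅, by simp, by simp⟩
  obtain ⟨s, hs, rfl⟩ := hI₀S
  refine ⟨s, hs, le_antisymm ?_ ?_⟩
  · exact Finset.le_inf fun M hM => sInf_le ⟨bot_le, hs M hM⟩
  · refine le_sInf ?_
    rintro M ⟨-, hM⟩
    by_contra hle
    have hmem : s.inf id ⊓ M ∈ S := by
      refine ⟨insert M s, ?_, ?_⟩
      · intro I hI
        rcases Finset.mem_insert.mp hI with rfl | hI
        · exact hM
        · exact hs I hI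
      · rw [Finset.inf_insert]
        simp [inf_comm]
    exact hmin _ hmem (lt_of_le_of_ne inf_le_left
      (fun h => hle (le_trans h.symm.le inf_le_right)))

lemma my_isSemisimple_quotient_jacobson [IsArtinianRing R] :
    IsSemisimpleModule R (R ⧸ Ideal.jacobson (⊥ : Ideal R)) := by
  classical
  obtain ⟨s, hs, hJ⟩ := my_jacobson_eq_finset_inf (R := R)
  haveI hsimple : ∀ i : s, IsSimpleModule R (R ⧸ (i.1 : Ideal R)) := fun i =>
    isSimpleModule_iff_isCoatom.mpr (hs i.1 i.2).out
  haveI : ∀ i : s, IsSemisimpleModule R (R ⧸ (i.1 : Ideal R)) := fun i =>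
    inferInstance
  haveI hP : IsSemisimpleModule R (∀ i : s, R ⧸ (i.1 : Ideal R)) := by
    apply isSemisimpleModule_of_isSemisimpleModule_submodule'
      (p := fun i : s => LinearMap.range (LinearMap.single R (fun j : s => R ⧸ (j.1 : Ideal R)) i))
    · intro i
      exact IsSemisimpleModule.range _
    · simp_rw [LinearMap.range_eq_map, Submodule.iSup_map_single, Submodule.pi_top]
  let ψ : R →ₗ[R] ∀ i : s, R ⧸ (i.1 : Ideal R) := LinearMap.pi fun i => (i.1 : Ideal R).mkQ
  have hker : Ideal.jacobson (⊥ : Ideal R) ≤ LinearMap.ker ψ := by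
    rw [hJ]
    intro x hx
    rw [LinearMap.mem_ker]
    funext i
    have : x ∈ (i.1 : Ideal R) := by
      have := Finset.inf_le i.2 (f := id)
      exact this hx
    simpa [ψ, Submodule.Quotient.mk_eq_zero] using this
  let φ := Submodule.liftQ _ ψ hker
  have hinj : Function.Injective φ := by
    rw [← LinearMap.ker_eq_bot, Submodule.ker_liftQ_eq_bot']
    apply le_antisymm hker
    intro x hx
    rw [LinearMap.mem_ker] at hx
    rw [hJ, Submodule.mem_finsetInf]
    intro I hI
    have := congrFun hx ⟨I, hI⟩
    simpa [ψ, Submodule.Quotient.mk_eq_zero] using this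
  exact IsSemisimpleModule.congr (M := ↥(LinearMap.range φ)) (LinearEquiv.ofInjective φ hinj)
end P2x
section P3
variable {R : Type u} [Ring R]


theorem my_isLocalRing_of_trivial_idempotents [IsArtinianRing R] [Nontrivial R]
    (h : ∀ e : R, IsIdempotentElem e → e = 0 ∨ e = 1) : IsLocalRing R := by
  have hJne : Ideal.jacobson (⊥ : Ideal R) ≠ ⊤ := by
    obtain ⟨M, hM⟩ := Ideal.exists_maximal R
    intro htop
    exact hM.ne_top (top_le_iff.mp (htop ▸ sInf_le ⟨bot_le, hM⟩))
  have key : ∀ x : R, x ∉ Ideal.jacobson (⊥ : Ideal R) → IsUnit x := by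
    intro x hx
    haveI := my_isSemisimple_quotient_jacobson (R := R)
    set Jc := Ideal.jacobson (⊥ : Ideal R) with hJcdef
    let mk : R → R ⧸ Jc := Submodule.Quotient.mk
    have hxb : (mk x : R ⧸ Jc) ≠ 0 := fun h0 => hx ((Submodule.Quotient.mk_eq_zero _).mp h0)
    set N : Submodule R (R ⧸ Jc) := Submodule.span R {mk x} with hNdef
    obtain ⟨C, hC⟩ := exists_isCompl N
    have h1mem : (mk 1 : R ⧸ Jc) ∈ N ⊔ C := by rw [hC.sup_eq_top]; trivial
    obtain ⟨nn, hn, cc, hcC, hnc⟩ := Submodule.mem_sup.mp h1mem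
    obtain ⟨a, ha⟩ := Submodule.mem_span_singleton.mp hn
    set e := a * x with hedef
    have hmke : (mk e : R ⧸ Jc) = nn := by
      rw [← ha]
      show Submodule.Quotient.mk (a * x) = a • Submodule.Quotient.mk x
      rw [← Submodule.Quotient.mk_smul, smul_eq_mul]
    have hmkf : (mk (1 - e) : R ⧸ Jc) = cc := by
      have h' : (mk (1 - e) : R ⧸ Jc) = mk 1 - mk e := by
        show Submodule.Quotient.mk _ = _
        rw [Submodule.Quotient.mk_sub]
      rw [h', hmke, ← hnc]
      abel
    -- z ∈ N (as mk z) implies mk (z * e) = mk z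
    have split : ∀ z : R, (mk z : R ⧸ Jc) ∈ N → (mk (z * e) : R ⧸ Jc) = mk z := by
      intro z hz
      have hze : (mk (z * e) : R ⧸ Jc) = z • (mk e : R ⧸ Jc) := by
        show Submodule.Quotient.mk _ = _
        rw [← Submodule.Quotient.mk_smul, smul_eq_mul]
      have hzf : (mk (z * (1 - e)) : R ⧸ Jc) = z • (mk (1 - e) : R ⧸ Jc) := by
        show Submodule.Quotient.mk _ = _
        rw [← Submodule.Quotient.mk_smul, smul_eq_mul]
      have h1 : (mk (z * e) : R ⧸ Jc) ∈ N := by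
        rw [hze, hmke]; exact N.smul_mem z hn
      have h2 : (mk (z * (1 - e)) : R ⧸ Jc) ∈ C := by
        rw [hzf, hmkf]; exact C.smul_mem z hcC
      have hsum : (mk (z * e) + mk (z * (1 - e)) : R ⧸ Jc) = mk z := by
        show Submodule.Quotient.mk _ + Submodule.Quotient.mk _ = Submodule.Quotient.mk _
        rw [← Submodule.Quotient.mk_add]
        congr 1
        noncomm_ring
      have hdiff : (mk z : R ⧸ Jc) - mk (z * e) ∈ N ⊓ C := by
        constructor
        · exact Submodule.sub_mem N hz h1
        · rw [← hsum]
          simpa using h2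
      rw [hC.inf_eq_bot] at hdiff
      have := (Submodule.mem_bot R).mp hdiff
      rw [sub_eq_zero] at this
      exact this.symm
    -- e is idempotent mod Jc
    have he2 : e * e - e ∈ Jc := by
      have hmem : (mk e : R ⧸ Jc) ∈ N := by rw [hmke]; exact hn
      have := split e hmem
      have hz : (mk (e * e - e) : R ⧸ Jc) = 0 := by
        show Submodule.Quotient.mk _ = 0
        rw [Submodule.Quotient.mk_sub]
        rw [show Submodule.Quotient.mk (e * e) = (mk (e * e) : R ⧸ Jc) from rfl]
        rw [show Submodule.Quotient.mk e = (mk e : R ⧸ Jc) from rfl]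
        rw [this, sub_self]
      exact (Submodule.Quotient.mk_eq_zero _).mp hz
    -- x * e ≡ x mod Jc
    have hxe : x * e - x ∈ Jc := by
      have hmem : (mk x : R ⧸ Jc) ∈ N := Submodule.mem_span_singleton_self _
      have := split x hmem
      have hz : (mk (x * e - x) : R ⧸ Jc) = 0 := by
        show Submodule.Quotient.mk _ = 0
        rw [Submodule.Quotient.mk_sub]
        rw [show Submodule.Quotient.mk (x * e) = (mk (x * e) : R ⧸ Jc) from rfl]
        rw [show Submodule.Quotient.mk x = (mk x : R ⧸ Jc) from rfl]
        rw [this, sub_self]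
      exact (Submodule.Quotient.mk_eq_zero _).mp hz
    -- nilpotency and lifting
    have hnil : IsNilpotent (e - e ^ 2) := by
      have : IsNilpotent (e * e - e) := my_isNilpotent_of_mem_jacobson he2
      have := this.neg
      simpa [sq, neg_sub] using this
    obtain ⟨k, hk⟩ := hnil
    have hk1 : (e - e ^ 2) ^ (k + 1) = 0 := by rw [pow_succ, hk, zero_mul]
    set K := k + 1 with hKdef
    have hidem := isIdempotentElem_one_sub_one_sub_pow_pow e K hk1
    set e' := 1 - (1 - e ^ K) ^ K with he'def
    -- polynomial divisibility: e' - e ∈ Jc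
    have hee' : e' - e ∈ Jc := by
      have hdvd : (Polynomial.X * (Polynomial.X - Polynomial.C 1) : Polynomial ℤ) ∣
          (1 - (1 - Polynomial.X ^ K) ^ K - Polynomial.X) := by
        have h0 : (Polynomial.X - Polynomial.C (0:ℤ)) ∣
            (1 - (1 - Polynomial.X ^ K) ^ K - Polynomial.X) := by
          rw [Polynomial.dvd_iff_isRoot]
          simp [Polynomial.IsRoot, zero_pow (Nat.succ_ne_zero k), hKdef]
        have h1 : (Polynomial.X - Polynomial.C (1:ℤ)) ∣
            (1 - (1 - Polynomial.X ^ K) ^ K - Polynomial.X) := by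
          rw [Polynomial.dvd_iff_isRoot]
          simp [Polynomial.IsRoot, zero_pow (Nat.succ_ne_zero k), hKdef]
        have hcop : IsCoprime (Polynomial.X : Polynomial ℤ) (Polynomial.X - Polynomial.C 1) := by
          refine ⟨1, -1, ?_⟩
          rw [Polynomial.C_1]
          ring
        rw [Polynomial.C_0, sub_zero] at h0
        exact hcop.mul_dvd h0 h1
      obtain ⟨g, hg⟩ := hdvd
      have := congrArg (Polynomial.aeval e) hg
      simp only [map_sub, map_one, map_mul, map_pow, Polynomial.aeval_X, Polynomial.aeval_C,
        map_one] at this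
      -- this : e' - e = (e * (e - 1)) * g(e)
      rw [show ((1:R) - (1 - e ^ K) ^ K) - e = e' - e from rfl] at this
      rw [this]
      have hgen : e * (e - 1) ∈ Jc := by
        have heq : e * (e - 1) = e * e - e := by noncomm_ring
        rw [heq]
        exact he2
      exact my_jacobson_mul_mem_right hgen _
    -- case analysis on the idempotent e'
    rcases h e' hidem with h0 | h1
    · -- e' = 0 : then e ∈ Jc, contradiction with x ∉ Jc
      exfalso
      have heJ : e ∈ Jc := by
        have : -(e' - e) ∈ Jc := neg_mem hee'
        rw [h0] at this
        simpa using this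
      apply hx
      have h1' : x * e ∈ Jc := Ideal.mul_mem_left _ x heJ
      have := Jc.sub_mem h1' hxe
      simpa using this
    · -- e' = 1 : then 1 - e ∈ Jc, so e is a unit, so x is left invertible
      have h1e : (1 : R) - e ∈ Jc := by
        rw [h1] at hee'
        exact hee'
      have hue : IsUnit e := by
        have hnil1 : IsNilpotent ((1:R) - e) := my_isNilpotent_of_mem_jacobson h1e
        have := hnil1.isUnit_one_sub
        simpa using this
      obtain ⟨u, hu⟩ := hue
      have hzx : ((↑u⁻¹ : R) * a) * x = 1 := by
        rw [mul_assoc, ← hedef, ← hu]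
        exact u.inv_mul
      set z := (↑u⁻¹ : R) * a with hzdef
      have hxz : IsIdempotentElem (x * z) := by
        show x * z * (x * z) = x * z
        rw [mul_assoc, ← mul_assoc z x, hzx, one_mul]
      rcases h _ hxz with hxz0 | hxz1
      · exfalso
        have : (1 : R) = 0 := by
          calc (1:R) = (z * x) * (z * x) := by rw [hzx, one_mul]
          _ = z * (x * z) * x := by simp only [mul_assoc]
          _ = 0 := by rw [hxz0, mul_zero, zero_mul]
        exact one_ne_zero this
      · exact ⟨⟨x, z, hxz1, hzx⟩, rfl⟩
  -- conclude locality
  refine ⟨fun {a b} hab => ?_⟩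
  by_contra hcon
  rw [not_or] at hcon
  have ha : a ∈ Ideal.jacobson (⊥ : Ideal R) := by
    by_contra hm; exact hcon.1 (key a hm)
  have hb : b ∈ Ideal.jacobson (⊥ : Ideal R) := by
    by_contra hm; exact hcon.2 (key b hm)
  have : (1 : R) ∈ Ideal.jacobson (⊥ : Ideal R) := by
    rw [← hab]; exact Submodule.add_mem _ ha hb
  exact hJne ((Ideal.eq_top_iff_one _).mpr this)
end P3
section P4
variable {R : Type u} [Ring R]

lemma my_exists_primitive_decomposition [IsArtinianRing R]
    (hab : ∀ e : R, IsIdempotentElem e → ∀ r : R, e * r = r * e) :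
    ∀ e₀ : R, IsIdempotentElem e₀ →
    ∃ (n : ℕ) (e : Fin n → R), OrthogonalIdempotents e ∧ (∑ i, e i = e₀) ∧
      ∀ i, e i * e₀ = e i ∧ e i ≠ 0 ∧
        ∀ f : R, IsIdempotentElem f → f * e i = f → f = 0 ∨ f = e i := by
  have main : ∀ I : Ideal R, ∀ e₀ : R, IsIdempotentElem e₀ → Ideal.span {e₀} = I →
      ∃ (n : ℕ) (e : Fin n → R), OrthogonalIdempotents e ∧ (∑ i, e i = e₀) ∧
        ∀ i, e i * e₀ = e i ∧ e i ≠ 0 ∧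
          ∀ f : R, IsIdempotentElem f → f * e i = f → f = 0 ∨ f = e i := by
    intro I
    induction I using WellFoundedLT.induction with
    | _ I IH =>
    intro e₀ he₀ hI
    by_cases h0 : e₀ = 0
    · refine ⟨0, Fin.elim0, ⟨fun i => i.elim0, fun i => i.elim0⟩, by simp [h0], fun i => i.elim0⟩
    by_cases hprim : ∀ f : R, IsIdempotentElem f → f * e₀ = f → f = 0 ∨ f = e₀
    · refine ⟨1, fun _ => e₀, ⟨fun _ => he₀, ?_⟩, by simp, fun i => ⟨he₀.eq, h0, hprim⟩⟩
      intro i j hij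
      exact absurd (Subsingleton.elim i j) hij
    · push_neg at hprim
      obtain ⟨f, hfidem, hfe, hf0, hfne⟩ := hprim
      have hef : e₀ * f = f := by rw [← hab f hfidem e₀]; exact hfe
      set g := e₀ - f with hgdef
      have hgidem : IsIdempotentElem g := by
        show (e₀ - f) * (e₀ - f) = e₀ - f
        rw [sub_mul, mul_sub, mul_sub, he₀.eq, hfe, hef, hfidem.eq]
        abel
      have hge : g * e₀ = g := by
        show (e₀ - f) * e₀ = e₀ - f
        rw [sub_mul, he₀.eq, hfe]
      have heg : e₀ * g = g := by
        show e₀ * (e₀ - f) = e₀ - f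
        rw [mul_sub, he₀.eq, hef]
      have hg0 : g ≠ 0 := by
        intro hz
        exact hfne (sub_eq_zero.mp hz).symm
      have hgne : g ≠ e₀ := by
        intro hz
        exact hf0 (sub_eq_self.mp hz)
      -- strict inclusions
      have hltf : Ideal.span {f} < I := by
        rw [← hI]
        refine lt_of_le_of_ne ?_ ?_
        · apply Ideal.span_le.mpr
          simp only [Set.singleton_subset_iff, SetLike.mem_coe]
          exact Submodule.mem_span_singleton.mpr ⟨f, by rw [smul_eq_mul, hfe]⟩
        · intro hcon
          have : e₀ ∈ Ideal.span {f} := by rw [hcon]; exact Ideal.subset_span rfl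
          obtain ⟨c, hc⟩ := Submodule.mem_span_singleton.mp this
          rw [smul_eq_mul] at hc
          have : e₀ * f = e₀ := by rw [← hc, mul_assoc, hfidem.eq]
          exact hfne (by rw [← hef, this])
      have hltg : Ideal.span {g} < I := by
        rw [← hI]
        refine lt_of_le_of_ne ?_ ?_
        · apply Ideal.span_le.mpr
          simp only [Set.singleton_subset_iff, SetLike.mem_coe]
          exact Submodule.mem_span_singleton.mpr ⟨g, by rw [smul_eq_mul, hge]⟩
        · intro hcon
          have : e₀ ∈ Ideal.span {g} := by rw [hcon]; exact Ideal.subset_span rfl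
          obtain ⟨c, hc⟩ := Submodule.mem_span_singleton.mp this
          rw [smul_eq_mul] at hc
          have h1 : e₀ * g = e₀ := by rw [← hc, mul_assoc, hgidem.eq]
          rw [heg] at h1
          exact hgne h1
      obtain ⟨n₁, A, hAorth, hAsum, hAprop⟩ := IH _ hltf f hfidem rfl
      obtain ⟨n₂, B, hBorth, hBsum, hBprop⟩ := IH _ hltg g hgidem rfl
      -- members of A are ≤ f (central), members of B ≤ g
      have hAf : ∀ i, A i * f = A i := fun i => (hAprop i).1
      have hBg : ∀ i, B i * g = B i := fun i => (hBprop i).1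
      have hfg : f * g = 0 := by
        show f * (e₀ - f) = 0
        rw [mul_sub, hfe, hfidem.eq, sub_self]
      have hgf : g * f = 0 := by
        show (e₀ - f) * f = 0
        rw [sub_mul, hef, hfidem.eq, sub_self]
      have hcross : ∀ i j, A i * B j = 0 ∧ B j * A i = 0 := by
        intro i j
        have hBcen := hab (B j) (hBorth.idem j)
        have hAcen := hab (A i) (hAorth.idem i)
        constructor
        · calc A i * B j = (A i * f) * (g * B j) := by
                rw [hAf, ← hBcen g, hBg]
          _ = A i * (f * g) * B j := by simp only [mul_assoc]
          _ = 0 := by rw [hfg, mul_zero, zero_mul]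
        · calc B j * A i = (B j * g) * (f * A i) := by
                rw [hBg, ← hAcen f, hAf]
          _ = B j * (g * f) * A i := by simp only [mul_assoc]
          _ = 0 := by rw [hgf, mul_zero, zero_mul]
      refine ⟨n₁ + n₂, Fin.append A B, ?_, ?_, ?_⟩
      · constructor
        · intro i
          induction i using Fin.addCases with
          | left i1 =>
            show Fin.append A B (Fin.castAdd n₂ i1) * Fin.append A B (Fin.castAdd n₂ i1) = _
            rw [Fin.append_left]
            exact hAorth.idem i1
          | right i1 =>
            show Fin.append A B (Fin.natAdd n₁ i1) * Fin.append A B (Fin.natAdd n₁ i1) = _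
            rw [Fin.append_right]
            exact hBorth.idem i1
        · intro i j hij
          induction i using Fin.addCases with
          | left i1 =>
            induction j using Fin.addCases with
            | left j1 =>
              rw [Fin.append_left, Fin.append_left]
              exact hAorth.ortho (fun hh => hij (congrArg (Fin.castAdd n₂) hh))
            | right j1 =>
              rw [Fin.append_left, Fin.append_right]
              exact (hcross i1 j1).1
          | right i1 =>
            induction j using Fin.addCases with
            | left j1 =>
              rw [Fin.append_right, Fin.append_left]
              exact (hcross j1 i1).2
            | right j1 =>
              rw [Fin.append_right, Fin.append_right]
              exact hBorth.ortho (fun hh => hij (congrArg (Fin.natAdd n₁) hh))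
      · rw [Fin.sum_univ_add]
        simp only [Fin.append_left, Fin.append_right]
        rw [hAsum, hBsum, hgdef]
        abel
      · intro i
        induction i using Fin.addCases with
        | left i1 =>
          rw [Fin.append_left]
          refine ⟨?_, (hAprop i1).2.1, (hAprop i1).2.2⟩
          rw [← hAf i1, mul_assoc, hfe]
        | right i1 =>
          rw [Fin.append_right]
          refine ⟨?_, (hBprop i1).2.1, (hBprop i1).2.2⟩
          rw [← hBg i1, mul_assoc, hge]
  intro e₀ he₀
  exact main _ e₀ he₀ rfl
end P4
end MyAux



section Corner
variable {R : Type u} [Ring R]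

/-- Congruence identifying the corner ring `eRe = Re` of a central idempotent. -/
def myCornerCon (e : R) (hc : ∀ r : R, e * r = r * e) : RingCon R where
  r a b := a * e = b * e
  iseqv := ⟨fun _ => rfl, Eq.symm, Eq.trans⟩
  mul' := by
    intro a b c d h1 h2
    show (a * c) * e = (b * d) * e
    calc (a * c) * e = a * (c * e) := by rw [mul_assoc]
    _ = a * (d * e) := by rw [h2]
    _ = a * (e * d) := by rw [hc d]
    _ = (a * e) * d := by rw [mul_assoc]
    _ = (b * e) * d := by rw [h1]
    _ = b * (e * d) := by rw [mul_assoc]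
    _ = b * (d * e) := by rw [hc d]
    _ = (b * d) * e := by rw [mul_assoc]
  add' := by
    intro a b c d h1 h2
    show (a + c) * e = (b + d) * e
    rw [add_mul, add_mul, h1, h2]

lemma myCornerCon_rel {e : R} {hc : ∀ r : R, e * r = r * e} {a b : R} :
    (myCornerCon e hc) a b ↔ a * e = b * e := Iff.rfl

end Corner

theorem stmt13 {R : Type u} [Ring R] [IsArtinianRing R] :
    (∃ (n : ℕ) (S : Fin n → Type u) (inst : ∀ i, Ring (S i)),
      letI := inst
      (∀ i, IsLocalRing (S i)) ∧ Nonempty (R ≃+* ((i : Fin n) → S i)))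
    ↔ ∀ e : R, IsIdempotentElem e → ∀ r : R, e * r = r * e := by
  constructor
  · rintro ⟨n, S, inst, hloc, ⟨φ⟩⟩ e he r
    letI := inst
    have he' : IsIdempotentElem (φ e) := by
      show φ e * φ e = φ e
      rw [← map_mul, he.eq]
    have htriv : ∀ i, φ e i = 0 ∨ φ e i = 1 := by
      intro i
      haveI := hloc i
      have hei : (φ e i) * (φ e i) = φ e i := congrFun he' i
      rcases IsLocalRing.isUnit_or_isUnit_of_add_one
          (show (φ e i) + (1 - φ e i) = 1 by abel) with hu | hu
      · right
        exact hu.mul_left_cancel (by rw [hei, mul_one])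
      · left
        have : (1 - φ e i) * (φ e i) = (1 - φ e i) * 0 := by
          rw [sub_mul, one_mul, hei, sub_self, mul_zero]
        exact hu.mul_left_cancel this
    have hcomm : φ e * φ r = φ r * φ e := by
      funext i
      rcases htriv i with h0 | h1
      · show φ e i * φ r i = φ r i * φ e i
        rw [h0, zero_mul, mul_zero]
      · show φ e i * φ r i = φ r i * φ e i
        rw [h1, one_mul, mul_one]
    apply φ.injective
    rw [map_mul, map_mul, hcomm]
  · intro hab
    obtain ⟨n, e, horth, hsum, hprop⟩ :=
      my_exists_primitive_decomposition hab 1 IsIdempotentElem.one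
    have hcent : ∀ i (r : R), e i * r = r * e i := fun i => hab (e i) (horth.idem i)
    let c : Fin n → RingCon R := fun i => myCornerCon (e i) (hcent i)
    refine ⟨n, fun i => (c i).Quotient, fun i => inferInstance, ?_, ?_⟩
    · -- each factor is local
      intro i
      haveI : IsArtinianRing (c i).Quotient :=
        Function.Surjective.isArtinianRing (f := (c i).mk') Quotient.mk''_surjective
      haveI : Nontrivial (c i).Quotient := by
        refine ⟨(c i).mk' 0, (c i).mk' (e i), ?_⟩
        intro hcon
        have : (0 : R) * e i = e i * e i := (RingCon.eq _).mp hcon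
        rw [zero_mul, (horth.idem i).eq] at this
        exact (hprop i).2.1 this.symm
      apply my_isLocalRing_of_trivial_idempotents
      intro q hq
      obtain ⟨x, rfl⟩ := Quotient.mk''_surjective (α := R) q
      have hx : (c i).mk' x = Quotient.mk'' x := rfl
      have hq' : (x * x) * e i = x * e i := by
        have : (c i) (x * x) x := (RingCon.eq _).mp (by
          rw [RingCon.coe_mul]
          exact hq)
        exact this
      have hxe : IsIdempotentElem (x * e i) := by
        show (x * e i) * (x * e i) = x * e i
        calc (x * e i) * (x * e i) = x * (e i * x) * e i := by simp only [mul_assoc]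
        _ = x * (x * e i) * e i := by rw [hcent i x]
        _ = (x * x) * (e i * e i) := by simp only [mul_assoc]
        _ = (x * x) * e i := by rw [(horth.idem i).eq]
        _ = x * e i := hq'
      have hle : (x * e i) * e i = x * e i := by
        rw [mul_assoc, (horth.idem i).eq]
      rcases (hprop i).2.2 (x * e i) hxe hle with h0 | h1
      · left
        show Quotient.mk'' x = (c i).mk' 0
        rw [← hx]
        apply (RingCon.eq _).mpr
        show x * e i = 0 * e i
        rw [h0, zero_mul]
      · right
        show Quotient.mk'' x = (c i).mk' 1
        rw [← hx]
        apply (RingCon.eq _).mpr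
        show x * e i = 1 * e i
        rw [h1, one_mul]
    · -- the isomorphism
      refine ⟨RingEquiv.ofBijective (Pi.ringHom fun i => (c i).mk') ⟨?_, ?_⟩⟩
      · intro x y hxy
        have hco : ∀ i, x * e i = y * e i := by
          intro i
          exact (RingCon.eq _).mp (congrFun hxy i)
        calc x = x * 1 := (mul_one x).symm
        _ = x * ∑ i, e i := by rw [hsum]
        _ = ∑ i, x * e i := by rw [Finset.mul_sum]
        _ = ∑ i, y * e i := by simp only [hco]
        _ = y * ∑ i, e i := by rw [Finset.mul_sum]
        _ = y := by rw [hsum, mul_one]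
      · intro q
        have hrep : ∀ i, ∃ x : R, (c i).mk' x = q i :=
          fun i => Quotient.mk''_surjective (q i)
        choose xs hxs using hrep
        classical
        refine ⟨∑ j, xs j * e j, ?_⟩
        funext i
        show (c i).mk' (∑ j, xs j * e j) = q i
        rw [← hxs i]
        apply (RingCon.eq _).mpr
        show (∑ j, xs j * e j) * e i = xs i * e i
        rw [Finset.sum_mul]
        rw [Finset.sum_eq_single i]
        · rw [mul_assoc, (horth.idem i).eq]
        · intro j _ hji
          rw [mul_assoc, horth.ortho hji, mul_zero]
        · intro hi
          exact absurd (Finset.mem_univ i) hi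
end
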